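/- arXiv:0906.4080 — 4 statements merged into one kernel-verified Lean document; each statement's English description precedes it below -/
import Mathlib

section
/- Let N=(G,r,p,q,I) be a network in which G is a finite connected simple graph, and let W be the infimum of W(f) over all flows f of intensity I from p to q in N. Then there is a unique flow i of intensity I with W(i) = W, and this flow i satisfies Kirchhoff's cycle law. -/
open scoped ENNReal Classical

/-- `f` is a flow of intensity `I` from `p` to `q` in the graph `G`:
it is antisymmetric, vanishes on non-adjacent pairs, and satisfies
Kirchhoff's node law at every vertex (the family of values on edges leaving a
vertex is summable, with sum `I` at `p`, `-I` at `q` and `0` elsewhere). -/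
def IsFlow {V : Type} (G : SimpleGraph V) (p q : V) (I : ℝ) (f : V → V → ℝ) : Prop :=
  (∀ x y, f x y = - f y x) ∧
  (∀ x y, ¬ G.Adj x y → f x y = 0) ∧
  ∀ x : V, HasSum (fun y : G.neighborSet x => f x y)
    (if x = p then I else if x = q then -I else 0)

/-- The energy `W(f) = ∑_{xy ∈ E} f(x,y)² r(xy)`; each edge of `G` corresponds to
exactly two ordered adjacent pairs contributing the same amount, whence the
division by 2. Valued in `ℝ≥0∞`. -/
noncomputable def energy {V : Type} (G : SimpleGraph V) (r : Sym2 V → ℝ)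
    (f : V → V → ℝ) : ℝ≥0∞ :=
  (∑' e : {e : V × V // G.Adj e.1 e.2},
      ENNReal.ofReal (f e.1.1 e.1.2 ^ 2 * r s(e.1.1, e.1.2))) / 2

/-- Kirchhoff's cycle law: around every (finite) cycle the potential
differences `f(x,y) · r(xy)` sum to zero. -/
def CycleLaw {V : Type} (G : SimpleGraph V) (r : Sym2 V → ℝ) (f : V → V → ℝ) : Prop :=
  ∀ (v : V) (c : G.Walk v v), c.IsCycle →
    (c.darts.map (fun d => f d.toProd.1 d.toProd.2 * r d.edge)).sum = 0

/-- `f` is cut-respecting: for every set `X` of vertices containing both `p` and `q`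
such that only finitely many edges join `X` to its complement, the net flow
across the cut is zero. -/
def CutRespecting {V : Type} (G : SimpleGraph V) (p q : V) (f : V → V → ℝ) : Prop :=
  ∀ X : Set V, p ∈ X → q ∈ X →
    ∀ hX : {e : V × V | e.1 ∈ X ∧ e.2 ∉ X ∧ G.Adj e.1 e.2}.Finite,
      ∑ e ∈ hX.toFinset, f e.1 e.2 = 0

set_option linter.unusedSectionVars false

section Aux

variable {V : Type} [Fintype V] {G : SimpleGraph V} {r : Sym2 V → ℝ}

noncomputable def adjPairs (G : SimpleGraph V) : Finset (V × V) :=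
  Finset.univ.filter (fun e : V × V => G.Adj e.1 e.2)

noncomputable def Epr (G : SimpleGraph V) (r : Sym2 V → ℝ) (f : V → V → ℝ) : ℝ :=
  ∑ e ∈ adjPairs G, f e.1 e.2 ^ 2 * r s(e.1, e.2)

lemma mem_adjPairs {e : V × V} : e ∈ adjPairs G ↔ G.Adj e.1 e.2 := by
  simp [adjPairs]

lemma Epr_term_nonneg (hr : ∀ e ∈ G.edgeSet, 0 < r e) (f : V → V → ℝ)
    {e : V × V} (he : e ∈ adjPairs G) : 0 ≤ f e.1 e.2 ^ 2 * r s(e.1, e.2) :=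
  mul_nonneg (sq_nonneg _) (hr _ (G.mem_edgeSet.2 (mem_adjPairs.1 he))).le

lemma Epr_nonneg (hr : ∀ e ∈ G.edgeSet, 0 < r e) (f : V → V → ℝ) : 0 ≤ Epr G r f :=
  Finset.sum_nonneg fun _ he => Epr_term_nonneg hr f he

lemma energy_eq (hr : ∀ e ∈ G.edgeSet, 0 < r e) (f : V → V → ℝ) :
    energy G r f = ENNReal.ofReal (Epr G r f) / 2 := by
  unfold energy Epr
  rw [tsum_fintype,
    ← Finset.sum_subtype (adjPairs G) (fun e => mem_adjPairs)
      (fun e : V × V => ENNReal.ofReal (f e.1 e.2 ^ 2 * r s(e.1, e.2))),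
    ← ENNReal.ofReal_sum_of_nonneg (fun e he => Epr_term_nonneg hr f he)]

lemma sum_eq_sum_univ {x : V} {f : V → V → ℝ} (h0 : ∀ y, ¬ G.Adj x y → f x y = 0) :
    ∑ y : G.neighborSet x, f x y = ∑ y : V, f x y := by
  rw [← Finset.sum_subtype (G.neighborSet x).toFinset (fun y => Set.mem_toFinset)
      (fun y => f x y)]
  exact Finset.sum_subset (Finset.subset_univ _)
    (fun y _ hy => h0 y (by simpa using hy))

lemma isFlow_iff {p q : V} {I : ℝ} {f : V → V → ℝ} :
    IsFlow G p q I f ↔ ((∀ x y, f x y = - f y x) ∧ (∀ x y, ¬ G.Adj x y → f x y = 0) ∧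
      ∀ x : V, ∑ y : V, f x y = if x = p then I else if x = q then -I else 0) := by
  unfold IsFlow
  refine and_congr_right fun _ => and_congr_right fun h0 => forall_congr' fun x => ?_
  rw [← sum_eq_sum_univ (fun y hy => h0 x y hy)]
  constructor
  · intro h; exact ((hasSum_fintype _).unique h)
  · intro h; rw [← h]; exact hasSum_fintype _

end Aux

section Walks

variable {V : Type} [Fintype V] {G : SimpleGraph V} {r : Sym2 V → ℝ}

noncomputable def lflow : List (V × V) → V → V → ℝ
  | [] => fun _ _ => 0
  | a :: l => fun x y =>
      ((if (x, y) = a then (1 : ℝ) else 0) - if (y, x) = a then 1 else 0) + lflow l x y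

@[simp] lemma lflow_nil (x y : V) : lflow ([] : List (V × V)) x y = 0 := rfl

@[simp] lemma lflow_cons (a : V × V) (l : List (V × V)) (x y : V) :
    lflow (a :: l) x y
      = ((if (x, y) = a then (1 : ℝ) else 0) - if (y, x) = a then 1 else 0) + lflow l x y := rfl

lemma lflow_antisymm (l : List (V × V)) (x y : V) : lflow l x y = - lflow l y x := by
  induction l with
  | nil => simp
  | cons a l ih => simp [ih]; ring

lemma lflow_eq_zero {l : List (V × V)} (hl : ∀ a ∈ l, G.Adj a.1 a.2) {x y : V}
    (h : ¬ G.Adj x y) : lflow l x y = 0 := by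
  induction l with
  | nil => rfl
  | cons a l ih =>
    rw [lflow_cons, ih (fun b hb => hl b (List.mem_cons_of_mem a hb)), if_neg, if_neg]
    · ring
    · rintro rfl; exact h (hl (y, x) List.mem_cons_self).symm
    · rintro rfl; exact h (hl (x, y) List.mem_cons_self)

lemma sum_ite_pair_left (x : V) (a : V × V) :
    ∑ y : V, (if (x, y) = a then (1:ℝ) else 0) = if x = a.1 then 1 else 0 := by
  rcases a with ⟨a1, a2⟩
  simp [Prod.ext_iff, ite_and]

lemma sum_ite_pair_right (x : V) (a : V × V) :
    ∑ y : V, (if (y, x) = a then (1:ℝ) else 0) = if x = a.2 then 1 else 0 := by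
  rcases a with ⟨a1, a2⟩
  simp [Prod.ext_iff, ite_and]

lemma walk_lflow_sum {u v : V} (w : G.Walk u v) (x : V) :
    ∑ y : V, lflow (w.darts.map SimpleGraph.Dart.toProd) x y
      = (if x = u then (1:ℝ) else 0) - (if x = v then 1 else 0) := by
  induction w with
  | nil => simp
  | cons h p ih =>
    simp only [SimpleGraph.Walk.darts_cons, List.map_cons, lflow_cons]
    rw [Finset.sum_add_distrib, Finset.sum_sub_distrib, sum_ite_pair_left,
      sum_ite_pair_right, ih]
    ring

lemma darts_adj {u v : V} (w : G.Walk u v) :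
    ∀ a ∈ w.darts.map SimpleGraph.Dart.toProd, G.Adj a.1 a.2 := by
  intro a ha
  obtain ⟨d, _, rfl⟩ := List.mem_map.1 ha
  exact d.adj

lemma walkFlow_isFlow {p q : V} (w : G.Walk p q) (hpq : p ≠ q) (I : ℝ) :
    IsFlow G p q I (fun x y => I * lflow (w.darts.map SimpleGraph.Dart.toProd) x y) := by
  rw [isFlow_iff]
  refine ⟨fun x y => by rw [lflow_antisymm]; ring,
    fun x y h => by rw [lflow_eq_zero (darts_adj w) h, mul_zero], fun x => ?_⟩
  rw [← Finset.mul_sum, walk_lflow_sum]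
  split_ifs with h1 h2
  · exact absurd (h1.symm.trans h2) hpq
  · ring
  · ring
  · ring

lemma closedWalkFlow_isFlow (p q : V) {v : V} (c : G.Walk v v) :
    IsFlow G p q 0 (lflow (c.darts.map SimpleGraph.Dart.toProd)) := by
  rw [isFlow_iff]
  refine ⟨fun x y => lflow_antisymm _ x y,
    fun x y h => lflow_eq_zero (darts_adj c) h, fun x => ?_⟩
  rw [walk_lflow_sum]
  split_ifs <;> ring

lemma lflow_inner (i : V → V → ℝ) (hi : ∀ x y, i x y = - i y x) (L : List (V × V)) :
    ∑ e : V × V, i e.1 e.2 * lflow L e.1 e.2 * r s(e.1, e.2)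
      = 2 * (L.map (fun a : V × V => i a.1 a.2 * r s(a.1, a.2))).sum := by
  induction L with
  | nil => simp
  | cons a l ih =>
    obtain ⟨a1, a2⟩ := a
    simp only [List.map_cons, List.sum_cons]
    have expand : ∀ e : V × V,
        i e.1 e.2 * lflow ((a1, a2) :: l) e.1 e.2 * r s(e.1, e.2)
          = ((if e = (a1, a2) then i e.1 e.2 * r s(e.1, e.2) else 0)
              - (if e = (a2, a1) then i e.1 e.2 * r s(e.1, e.2) else 0))
            + i e.1 e.2 * lflow l e.1 e.2 * r s(e.1, e.2) := by
      rintro ⟨x, y⟩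
      rw [lflow_cons]
      dsimp only
      have hs : ((y, x) = (a1, a2)) ↔ ((x, y) = (a2, a1)) := by
        simp only [Prod.mk.injEq]; tauto
      simp only [hs]
      by_cases h1 : (x, y) = (a1, a2) <;> by_cases h2 : (x, y) = (a2, a1)
      · rw [if_pos h1, if_pos h2, if_pos h1, if_pos h2]; ring
      · rw [if_pos h1, if_neg h2, if_pos h1, if_neg h2]; ring
      · rw [if_neg h1, if_pos h2, if_neg h1, if_pos h2]; ring
      · rw [if_neg h1, if_neg h2, if_neg h1, if_neg h2]; ring
    rw [Finset.sum_congr rfl (fun e _ => expand e), Finset.sum_add_distrib,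
      Finset.sum_sub_distrib, ih]
    have s1 : ∑ e : V × V, (if e = (a1, a2) then i e.1 e.2 * r s(e.1, e.2) else 0)
        = i a1 a2 * r s(a1, a2) := by simp
    have s2 : ∑ e : V × V, (if e = (a2, a1) then i e.1 e.2 * r s(e.1, e.2) else 0)
        = i a2 a1 * r s(a2, a1) := by simp
    rw [s1, s2, hi a2 a1, show s(a2, a1) = s(a1, a2) from Sym2.eq_swap]
    ring

end Walks

section Analysis

variable {V : Type} [Fintype V] {G : SimpleGraph V} {r : Sym2 V → ℝ}

lemma IsFlow.add_smul {p q : V} {I : ℝ} {f g : V → V → ℝ}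
    (hf : IsFlow G p q I f) (hg : IsFlow G p q 0 g) (t : ℝ) :
    IsFlow G p q I (fun x y => f x y + t * g x y) := by
  rw [isFlow_iff] at *
  obtain ⟨f1, f2, f3⟩ := hf
  obtain ⟨g1, g2, g3⟩ := hg
  refine ⟨fun x y => by rw [f1, g1]; ring,
    fun x y h => by rw [f2 x y h, g2 x y h]; ring, fun x => ?_⟩
  rw [Finset.sum_add_distrib, f3, ← Finset.mul_sum, g3]
  split_ifs <;> ring

lemma IsFlow.sub {p q : V} {I : ℝ} {f g : V → V → ℝ}
    (hf : IsFlow G p q I f) (hg : IsFlow G p q I g) :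
    IsFlow G p q 0 (fun x y => f x y - g x y) := by
  rw [isFlow_iff] at *
  obtain ⟨f1, f2, f3⟩ := hf
  obtain ⟨g1, g2, g3⟩ := hg
  refine ⟨fun x y => by rw [f1, g1]; ring,
    fun x y h => by rw [f2 x y h, g2 x y h]; ring, fun x => ?_⟩
  rw [Finset.sum_sub_distrib, f3, g3]
  split_ifs <;> ring

lemma Epr_add_smul (f g : V → V → ℝ) (t : ℝ) :
    Epr G r (fun x y => f x y + t * g x y)
      = Epr G r f
        + t * (∑ e ∈ adjPairs G, 2 * f e.1 e.2 * g e.1 e.2 * r s(e.1, e.2))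
        + t ^ 2 * Epr G r g := by
  unfold Epr
  rw [Finset.mul_sum, Finset.mul_sum, ← Finset.sum_add_distrib, ← Finset.sum_add_distrib]
  exact Finset.sum_congr rfl fun e _ => by ring

lemma quad_zero {a b : ℝ} (h : ∀ t : ℝ, 0 ≤ a * t ^ 2 + b * t) : b = 0 := by
  by_contra hb
  have h5 : (0:ℝ) < (|a| + 1) ^ 2 := by positivity
  have hb2 : (0:ℝ) < b ^ 2 := by positivity
  have h4 : a * (-b / (|a| + 1)) ^ 2 + b * (-b / (|a| + 1))
      = ((a - (|a| + 1)) * b ^ 2) / (|a| + 1) ^ 2 := by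
    field_simp
    ring
  have h1 := h (-b / (|a| + 1))
  rw [h4] at h1
  have key : (0:ℝ) ≤ (a - (|a| + 1)) * b ^ 2 := by
    have := (le_div_iff₀ h5).1 h1
    simpa using this
  have h6 : a - (|a| + 1) ≤ -1 := by linarith [le_abs_self a]
  nlinarith [mul_le_mul_of_nonneg_right h6 hb2.le]

lemma continuous_Epr : Continuous (Epr G r) := by
  unfold Epr
  refine continuous_finset_sum _ fun e _ => ?_
  exact (((continuous_apply e.2).comp (continuous_apply (A := fun _ : V => V → ℝ) e.1)).pow 2).mul continuous_const

lemma isClosed_flows (p q : V) (I : ℝ) :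
    IsClosed {f : V → V → ℝ | IsFlow G p q I f} := by
  have heval : ∀ x y : V, Continuous fun f : V → V → ℝ => f x y := fun x y =>
    (continuous_apply y).comp (continuous_apply x)
  have hset : {f : V → V → ℝ | IsFlow G p q I f} =
      (⋂ (x) (y), {f : V → V → ℝ | f x y = - f y x}) ∩
      ((⋂ (x) (y) (_ : ¬ G.Adj x y), {f : V → V → ℝ | f x y = 0}) ∩
       (⋂ x, {f : V → V → ℝ |
          ∑ y : V, f x y = if x = p then I else if x = q then -I else 0})) := by
    ext f
    simp only [Set.mem_setOf_eq, Set.mem_inter_iff, Set.mem_iInter, isFlow_iff]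
  rw [hset]
  refine ((isClosed_iInter fun x => isClosed_iInter fun y =>
      isClosed_eq (heval x y) (heval y x).neg)).inter
    (((isClosed_iInter fun x => isClosed_iInter fun y => isClosed_iInter fun _ =>
      isClosed_eq (heval x y) continuous_const)).inter
     (isClosed_iInter fun x =>
      isClosed_eq (continuous_finset_sum _ fun y _ => heval x y) continuous_const))

end Analysis

section Minimizer

variable {V : Type} [Fintype V] {G : SimpleGraph V} {r : Sym2 V → ℝ}

lemma exists_minimizer (hconn : G.Connected) (hr : ∀ e ∈ G.edgeSet, 0 < r e)
    {p q : V} (hpq : p ≠ q) (I : ℝ) :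
    ∃ i, IsFlow G p q I i ∧ ∀ f, IsFlow G p q I f → Epr G r i ≤ Epr G r f := by
  classical
  obtain ⟨w⟩ := hconn.preconnected p q
  obtain ⟨f₀, hf₀⟩ : ∃ f, IsFlow G p q I f := ⟨_, walkFlow_isFlow w hpq I⟩
  set K : Set (V → V → ℝ) :=
    {f | IsFlow G p q I f} ∩ {f | Epr G r f ≤ Epr G r f₀} with hKdef
  have hKc : IsClosed K :=
    (isClosed_flows p q I).inter (isClosed_le continuous_Epr continuous_const)
  have hKb : Bornology.IsBounded K := by
    rw [isBounded_iff_forall_norm_le]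
    set C : ℝ := ∑ e ∈ adjPairs G, Real.sqrt (Epr G r f₀ / r s(e.1, e.2)) with hCdef
    have hC0 : 0 ≤ C := Finset.sum_nonneg fun e _ => Real.sqrt_nonneg _
    refine ⟨C, fun f hf => ?_⟩
    obtain ⟨hfS, hfM⟩ := hf
    rw [pi_norm_le_iff_of_nonneg hC0]
    intro x
    rw [pi_norm_le_iff_of_nonneg hC0]
    intro y
    rw [Real.norm_eq_abs]
    by_cases hxy : G.Adj x y
    · have hmem : (x, y) ∈ adjPairs G := mem_adjPairs.2 hxy
      have hrpos := hr _ (G.mem_edgeSet.2 hxy)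
      have h1 : f x y ^ 2 * r s(x, y) ≤ Epr G r f₀ :=
        le_trans (Finset.single_le_sum (fun e he => Epr_term_nonneg hr f he) hmem) hfM
      have h2 : f x y ^ 2 ≤ Epr G r f₀ / r s(x, y) := (le_div_iff₀ hrpos).2 h1
      refine le_trans (Real.abs_le_sqrt h2) ?_
      rw [hCdef]
      simpa using Finset.single_le_sum
        (f := fun e : V × V => Real.sqrt (Epr G r f₀ / r s(e.1, e.2)))
        (fun e _ => Real.sqrt_nonneg _) hmem
    · rw [(isFlow_iff.1 hfS).2.1 x y hxy]
      simpa using hC0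
  have hcomp : IsCompact K := Metric.isCompact_of_isClosed_isBounded hKc hKb
  have hKne : K.Nonempty := ⟨f₀, hf₀, show Epr G r f₀ ≤ Epr G r f₀ from le_refl _⟩
  obtain ⟨i, hiK, hi_min⟩ := hcomp.exists_isMinOn hKne continuous_Epr.continuousOn
  refine ⟨i, hiK.1, fun f hf => ?_⟩
  by_cases hfK : Epr G r f ≤ Epr G r f₀
  · exact (isMinOn_iff.1 hi_min) f ⟨hf, hfK⟩
  · exact le_trans ((isMinOn_iff.1 hi_min) f₀
      ⟨hf₀, show Epr G r f₀ ≤ Epr G r f₀ from le_refl _⟩) (not_le.1 hfK).le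

end Minimizer

/-- In a finite connected network there is a unique flow of intensity `I`
attaining the infimum of the energy over all such flows, and this flow
satisfies Kirchhoff's cycle law. -/
theorem unique_minimum_energy_flow_finite
    {V : Type} [Fintype V] (G : SimpleGraph V) (hconn : G.Connected)
    (r : Sym2 V → ℝ) (hr : ∀ e ∈ G.edgeSet, 0 < r e)
    (p q : V) (hpq : p ≠ q) (I : ℝ) :
    ∃ i : V → V → ℝ, IsFlow G p q I i ∧
      energy G r i = (⨅ f : {f : V → V → ℝ // IsFlow G p q I f}, energy G r f.1) ∧
      CycleLaw G r i ∧
      ∀ j : V → V → ℝ, IsFlow G p q I j →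
        energy G r j = (⨅ f : {f : V → V → ℝ // IsFlow G p q I f}, energy G r f.1) →
        j = i := by
  classical
  obtain ⟨i, hiS, hmin⟩ := exists_minimizer hconn hr hpq I
  have hEi : energy G r i = ⨅ f : {f : V → V → ℝ // IsFlow G p q I f}, energy G r f.1 := by
    refine le_antisymm (le_iInf fun f => ?_) (iInf_le (fun f : {f : V → V → ℝ // IsFlow G p q I f} => energy G r f.1)
      (⟨i, hiS⟩ : {f : V → V → ℝ // IsFlow G p q I f}))
    rw [energy_eq hr, energy_eq hr]
    exact ENNReal.div_le_div_right (ENNReal.ofReal_le_ofReal (hmin f.1 f.2)) _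
  have hcyc : CycleLaw G r i := by
    intro v c _
    set L : List (V × V) := c.darts.map SimpleGraph.Dart.toProd with hLdef
    have hgflow : IsFlow G p q 0 (lflow L) := closedWalkFlow_isFlow p q c
    set B : ℝ := ∑ e ∈ adjPairs G, 2 * i e.1 e.2 * lflow L e.1 e.2 * r s(e.1, e.2)
      with hBdef
    have hBt : ∀ t : ℝ, 0 ≤ Epr G r (lflow L) * t ^ 2 + B * t := by
      intro t
      have h1 := hmin _ (hiS.add_smul hgflow t)
      rw [Epr_add_smul] at h1
      linarith
    have hB0 : B = 0 := quad_zero hBt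
    have huniv : B = ∑ e : V × V, 2 * i e.1 e.2 * lflow L e.1 e.2 * r s(e.1, e.2) := by
      rw [hBdef]
      refine Finset.sum_subset (Finset.subset_univ _) (fun e _ he => ?_)
      rw [(isFlow_iff.1 hiS).2.1 e.1 e.2 (by simpa [adjPairs] using he)]
      ring
    have hinner := lflow_inner (r := r) i (isFlow_iff.1 hiS).1 L
    have h2 : ∑ e : V × V, 2 * i e.1 e.2 * lflow L e.1 e.2 * r s(e.1, e.2)
        = 2 * ∑ e : V × V, i e.1 e.2 * lflow L e.1 e.2 * r s(e.1, e.2) := by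
      rw [Finset.mul_sum]
      exact Finset.sum_congr rfl fun e _ => by ring
    have hfin : (c.darts.map (fun d => i d.toProd.1 d.toProd.2 * r d.edge)).sum
        = (L.map (fun a : V × V => i a.1 a.2 * r s(a.1, a.2))).sum := by
      rw [hLdef, List.map_map]
      congr 1
    have h4 : (0:ℝ) = 4 * (L.map (fun a : V × V => i a.1 a.2 * r s(a.1, a.2))).sum := by
      rw [← hB0, huniv, h2, hinner]; ring
    rw [hfin]
    linarith
  refine ⟨i, hiS, hEi, hcyc, ?_⟩
  intro j hj hEj
  have hEji : Epr G r j = Epr G r i := by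
    have he : energy G r j = energy G r i := by rw [hEj, hEi]
    rw [energy_eq hr, energy_eq hr] at he
    have h2 : ENNReal.ofReal (Epr G r j) = ENNReal.ofReal (Epr G r i) := by
      have h3 := congrArg (· * 2) he
      simpa [ENNReal.div_mul_cancel (two_ne_zero) (ENNReal.ofNat_ne_top)] using h3
    exact (ENNReal.ofReal_eq_ofReal_iff (Epr_nonneg hr j) (Epr_nonneg hr i)).1 h2
  have hg0 : IsFlow G p q 0 (fun x y => j x y - i x y) := hj.sub hiS
  set B : ℝ := ∑ e ∈ adjPairs G,
      2 * i e.1 e.2 * (j e.1 e.2 - i e.1 e.2) * r s(e.1, e.2) with hBdef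
  have hj' : (fun x y => i x y + 1 * (j x y - i x y)) = j := by
    funext x y
    ring
  have e1 : Epr G r j = Epr G r i + B + Epr G r (fun x y => j x y - i x y) := by
    have h1 := Epr_add_smul (G := G) (r := r) i (fun x y => j x y - i x y) 1
    rw [hj'] at h1
    rw [h1, hBdef]
    ring
  have e2 : Epr G r i ≤ Epr G r i + (1/2) * B
      + (1/2) ^ 2 * Epr G r (fun x y => j x y - i x y) := by
    have h := hmin _ (hiS.add_smul hg0 (1/2))
    rwa [Epr_add_smul] at h
  have hCg0 : Epr G r (fun x y => j x y - i x y) = 0 := by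
    have hCnn : 0 ≤ Epr G r (fun x y => j x y - i x y) := Epr_nonneg hr _
    nlinarith
  have hterm : ∀ e ∈ adjPairs G, (j e.1 e.2 - i e.1 e.2) ^ 2 * r s(e.1, e.2) = 0 := by
    have h0 : ∑ e ∈ adjPairs G, (j e.1 e.2 - i e.1 e.2) ^ 2 * r s(e.1, e.2) = 0 := hCg0
    exact (Finset.sum_eq_zero_iff_of_nonneg
      (fun e he => Epr_term_nonneg hr (fun x y => j x y - i x y) he)).1 h0
  funext x y
  by_cases hxy : G.Adj x y
  · have h0 := hterm (x, y) (mem_adjPairs.2 hxy)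
    have hrp := hr _ (G.mem_edgeSet.2 hxy)
    have hsq : (j x y - i x y) ^ 2 = 0 := by
      rcases mul_eq_zero.1 h0 with h | h
      · exact h
      · exact absurd h hrp.ne'
    have hgz : j x y - i x y = 0 := pow_eq_zero_iff (n := 2) (by norm_num) |>.1 hsq
    linarith
  · rw [(isFlow_iff.1 hj).2.1 x y hxy, (isFlow_iff.1 hiS).2.1 x y hxy]
end

section
/- Let N=(G,r,p,q,I) be a network in which G is a finite connected simple graph. Then there exists exactly one flow of intensity I from p to q in N that satisfies Kirchhoff's cycle law. -/
open scoped ENNReal Classical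

set_option linter.unusedSectionVars false

namespace ElecAux

variable {V : Type} {G : SimpleGraph V}

/-- Sum of an edge-function along the darts of a walk. -/
def wsum (h : V → V → ℝ) {u v : V} (w : G.Walk u v) : ℝ :=
  (w.darts.map (fun d => h d.toProd.1 d.toProd.2)).sum

@[simp] lemma wsum_nil (h : V → V → ℝ) (v : V) : wsum h (SimpleGraph.Walk.nil : G.Walk v v) = 0 := rfl

@[simp] lemma wsum_cons (h : V → V → ℝ) {u x v : V} (ha : G.Adj u x) (w : G.Walk x v) :
    wsum h (SimpleGraph.Walk.cons ha w) = h u x + wsum h w := by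
  simp [wsum]

lemma wsum_append (h : V → V → ℝ) {u v z : V} (w1 : G.Walk u v) (w2 : G.Walk v z) :
    wsum h (w1.append w2) = wsum h w1 + wsum h w2 := by
  simp [wsum, SimpleGraph.Walk.darts_append]

lemma wsum_reverse (h : V → V → ℝ) (hasym : ∀ x y, h x y = - h y x) {u v : V} (w : G.Walk u v) :
    wsum h w.reverse = - wsum h w := by
  induction w with
  | nil => simp
  | @cons a b c ha w ih =>
    rw [SimpleGraph.Walk.reverse_cons, wsum_append, ih, wsum_cons, wsum_nil, hasym b a, wsum_cons]
    ring


/-- If an antisymmetric edge-function sums to zero around every cycle,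
it sums to zero around every closed walk. -/
lemma wsum_closed_eq_zero (h : V → V → ℝ) (hasym : ∀ x y, h x y = - h y x)
    (hcyc : ∀ (v : V) (c : G.Walk v v), c.IsCycle → wsum h c = 0) :
    ∀ (n : ℕ) (v : V) (w : G.Walk v v), w.length ≤ n → wsum h w = 0 := by
  intro n
  induction n using Nat.strong_induction_on with
  | _ n ih =>
  intro v w hw
  cases w with
  | nil => simp
  | @cons _ x _ ha w' =>
    have hn1 : 1 ≤ n := le_trans (by simp) hw
    by_cases hN : w'.support.Nodup
    · have hp : w'.IsPath := SimpleGraph.Walk.IsPath.mk' hN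
      by_cases he : s(v, x) ∈ w'.edges
      · -- the first edge is reused; since w' is a path ending at v, it must be its last edge
        have hrevp : w'.reverse.IsPath := hp.reverse
        have herev : s(v, x) ∈ w'.reverse.edges := by
          rw [SimpleGraph.Walk.edges_reverse, List.mem_reverse]; exact he
        cases hrev : w'.reverse with
        | nil =>
          rw [hrev] at herev; simp at herev
        | @cons _ y _ ha2 t =>
          rw [hrev] at herev hrevp
          have hvt : v ∉ t.support := by
            have := hrevp.support_nodup
            simp only [SimpleGraph.Walk.support_cons, List.nodup_cons] at this
            exact this.1
          have hxy : x = y := by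
            rw [SimpleGraph.Walk.edges_cons, List.mem_cons] at herev
            rcases herev with h1 | h1
            · rcases Sym2.eq_iff.mp h1 with ⟨_, h2⟩ | ⟨h2, h3⟩
              · exact h2
              · exact absurd h3.symm (G.ne_of_adj ha)
            · exact absurd (SimpleGraph.Walk.fst_mem_support_of_mem_edges t h1) hvt
          subst hxy
          have hlt : t.length < n := by
            have := congrArg SimpleGraph.Walk.length hrev
            simp only [SimpleGraph.Walk.length_reverse, SimpleGraph.Walk.length_cons] at this
            have hw2 : w'.length + 1 ≤ n := by
              simpa using hw
            omega
          have ht0 : wsum h t = 0 := ih t.length hlt x t le_rfl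
          have h1 : wsum h w'.reverse = - wsum h w' := wsum_reverse h hasym w'
          rw [hrev, wsum_cons, ht0] at h1
          rw [wsum_cons]
          have : wsum h w' = - h v x := by linarith
          rw [this]; ring
      · exact hcyc v (SimpleGraph.Walk.cons ha w') ((SimpleGraph.Walk.cons_isCycle_iff w' ha).2 ⟨hp, he⟩)
    · -- there is a repeated vertex; rotate and split
      obtain ⟨u, hu⟩ := List.exists_duplicate_iff_not_nodup.2 hN
      have hcu : 2 ≤ w'.support.count u := List.duplicate_iff_two_le_count.mp hu
      have humem : u ∈ (SimpleGraph.Walk.cons ha w').support := by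
        rw [SimpleGraph.Walk.support_cons]
        exact List.mem_cons_of_mem _ (List.count_pos_iff.mp (by omega))
      obtain ⟨wr, hws, hlen, hcount⟩ :
          ∃ wr : G.Walk u u, wsum h wr = wsum h (SimpleGraph.Walk.cons ha w') ∧
            wr.length = (SimpleGraph.Walk.cons ha w').length ∧
            2 ≤ wr.support.tail.count u := by
        refine ⟨(SimpleGraph.Walk.cons ha w').rotate u humem, ?_, ?_, ?_⟩
        · exact (((SimpleGraph.Walk.rotate_darts _ _ humem).perm).map _).sum_eq
        · have := (((SimpleGraph.Walk.rotate_darts _ _ humem).perm).length_eq)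
          simpa [SimpleGraph.Walk.length_darts] using this
        · rw [(SimpleGraph.Walk.support_rotate _ _ humem).perm.count_eq]
          simpa using hcu
      cases wr with
      | nil => simp at hcount
      | @cons _ z _ ha2 t =>
        simp only [SimpleGraph.Walk.support_cons, List.tail_cons] at hcount
        have hut : u ∈ t.support := List.count_pos_iff.mp (by omega)
        have hspec := SimpleGraph.Walk.take_spec t hut
        have hsum_split : wsum h t = wsum h (t.takeUntil u hut) + wsum h (t.dropUntil u hut) := by
          conv_lhs => rw [← hspec]
          exact wsum_append h _ _
        have hlen_split : (t.takeUntil u hut).length + (t.dropUntil u hut).length = t.length := by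
          conv_rhs => rw [← hspec]
          rw [SimpleGraph.Walk.length_append]
        have hcount1 : (t.takeUntil u hut).support.count u = 1 :=
          SimpleGraph.Walk.count_support_takeUntil_eq_one t hut
        have hdrop_pos : 1 ≤ (t.dropUntil u hut).length := by
          by_contra hcon
          push_neg at hcon
          have hdl : (t.dropUntil u hut).length = 0 := by omega
          have hst : (t.dropUntil u hut).support.tail = [] := by
            have h3 := SimpleGraph.Walk.length_support (t.dropUntil u hut)
            have h4 : ((t.dropUntil u hut).support.tail).length = (t.dropUntil u hut).support.length - 1 := List.length_tail
            rw [h3, hdl] at h4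
            exact List.eq_nil_of_length_eq_zero (by omega)
          have hone : t.support.count u = 1 := by
            conv_lhs => rw [← hspec]
            rw [SimpleGraph.Walk.support_append, List.count_append, hcount1, hst]
            simp
          omega
        simp only [SimpleGraph.Walk.length_cons] at hlen hw
        have hc1len : (SimpleGraph.Walk.cons ha2 (t.takeUntil u hut)).length < n := by
          simp only [SimpleGraph.Walk.length_cons]
          omega
        have hc2len : (t.dropUntil u hut).length < n := by
          omega
        have h1 : wsum h (SimpleGraph.Walk.cons ha2 (t.takeUntil u hut)) = 0 :=
          ih _ hc1len u _ le_rfl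
        have h2 : wsum h (t.dropUntil u hut) = 0 := ih _ hc2len u _ le_rfl
        rw [wsum_cons] at h1
        rw [← hws, wsum_cons, hsum_split, h2]
        linarith

/-- Telescoping sum of a gradient along a walk. -/
lemma wsum_grad (φ : V → ℝ) {u v : V} (w : G.Walk u v) :
    wsum (fun x y => φ x - φ y) w = φ u - φ v := by
  induction w with
  | nil => simp
  | cons ha w ih => rw [wsum_cons, ih]; ring

/-- Pointwise difference of edge-functions. -/
lemma wsum_sub_fn (h1 h2 : V → V → ℝ) {u v : V} (w : G.Walk u v) :
    wsum (fun x y => h1 x y - h2 x y) w = wsum h1 w - wsum h2 w := by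
  induction w with
  | nil => simp
  | cons ha w ih => rw [wsum_cons, wsum_cons, wsum_cons, ih]; ring

/-- Path independence, given vanishing around closed walks. -/
lemma wsum_indep (h : V → V → ℝ) (hasym : ∀ x y, h x y = - h y x)
    (hcyc : ∀ (v : V) (c : G.Walk v v), c.IsCycle → wsum h c = 0)
    {a b : V} (w1 w2 : G.Walk a b) : wsum h w1 = wsum h w2 := by
  have h0 := wsum_closed_eq_zero h hasym hcyc (w1.append w2.reverse).length a
    (w1.append w2.reverse) le_rfl
  rw [wsum_append, wsum_reverse h hasym] at h0
  linarith

lemma sum_antisym_zero [Fintype V] (a : V → V → ℝ) (ha : ∀ x y, a x y = - a y x) :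
    ∑ x : V, ∑ y : V, a x y = 0 := by
  have h1 : ∑ x : V, ∑ y : V, a x y = ∑ y : V, ∑ x : V, a x y := Finset.sum_comm
  have h2 : ∑ y : V, ∑ x : V, a x y = - ∑ x : V, ∑ y : V, a x y := by
    rw [← Finset.sum_neg_distrib]
    refine Finset.sum_congr rfl fun x _ => ?_
    rw [← Finset.sum_neg_distrib]
    refine Finset.sum_congr rfl fun y _ => ?_
    exact ha y x
  linarith [h1.trans h2]

/-- Replace an edge-function by another agreeing on adjacent pairs. -/
lemma wsum_congr_adj (h1 h2 : V → V → ℝ) (hh : ∀ x y, G.Adj x y → h1 x y = h2 x y)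
    {u v : V} (w : G.Walk u v) : wsum h1 w = wsum h2 w := by
  induction w with
  | nil => simp
  | cons ha w ih => rw [wsum_cons, wsum_cons, ih, hh _ _ ha]

lemma wsum_eq_cycleSum (f : V → V → ℝ) (r : Sym2 V → ℝ) {u v : V} (w : G.Walk u v) :
    wsum (fun x y => f x y * r s(x, y)) w
      = (w.darts.map (fun d => f d.toProd.1 d.toProd.2 * r d.edge)).sum := rfl

section Lap

variable [Fintype V] (G) (r : Sym2 V → ℝ)

/-- Conductance matrix. -/
noncomputable def tc (x y : V) : ℝ := if G.Adj x y then (r s(x, y))⁻¹ else 0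

lemma tc_symm (x y : V) : tc G r x y = tc G r y x := by
  by_cases h : G.Adj x y
  · simp [tc, h, h.symm, Sym2.eq_swap]
  · have h' : ¬ G.Adj y x := fun hh => h hh.symm
    simp [tc, h, h']

lemma tc_nonneg (hr : ∀ e ∈ G.edgeSet, 0 < r e) (x y : V) : 0 ≤ tc G r x y := by
  by_cases h : G.Adj x y
  · simp only [tc, if_pos h]
    exact le_of_lt (inv_pos.2 (hr _ ((SimpleGraph.mem_edgeSet G).2 h)))
  · simp [tc, h]

lemma tc_pos (hr : ∀ e ∈ G.edgeSet, 0 < r e) {x y : V} (h : G.Adj x y) : 0 < tc G r x y := by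
  simp only [tc, if_pos h]
  exact inv_pos.2 (hr _ ((SimpleGraph.mem_edgeSet G).2 h))

/-- The weighted graph Laplacian. -/
noncomputable def lap : (V → ℝ) →ₗ[ℝ] (V → ℝ) where
  toFun φ := fun x => ∑ y, (φ x - φ y) * tc G r x y
  map_add' φ ψ := by
    funext x
    simp only [Pi.add_apply]
    rw [← Finset.sum_add_distrib]
    exact Finset.sum_congr rfl fun y _ => by ring
  map_smul' a φ := by
    funext x
    simp only [Pi.smul_apply, smul_eq_mul, RingHom.id_apply]
    rw [Finset.mul_sum]
    exact Finset.sum_congr rfl fun y _ => by ring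

lemma lap_apply (φ : V → ℝ) (x : V) : lap G r φ x = ∑ y, (φ x - φ y) * tc G r x y := rfl

/-- The sum-of-coordinates functional. -/
noncomputable def sumF : (V → ℝ) →ₗ[ℝ] ℝ where
  toFun φ := ∑ x, φ x
  map_add' φ ψ := by simp [Finset.sum_add_distrib]
  map_smul' a φ := by simp [Finset.mul_sum]

end Lap

end ElecAux

open ElecAux

/-- In a finite connected network there is exactly one flow of intensity `I`
from `p` to `q` satisfying Kirchhoff's cycle law. -/
theorem unique_electrical_current_finite
    {V : Type} [Fintype V] (G : SimpleGraph V) (hconn : G.Connected)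
    (r : Sym2 V → ℝ) (hr : ∀ e ∈ G.edgeSet, 0 < r e)
    (p q : V) (hpq : p ≠ q) (I : ℝ) :
    ∃! f : V → V → ℝ, IsFlow G p q I f ∧ CycleLaw G r f := by
  classical
  have hne : Nonempty V := hconn.nonempty
  obtain ⟨v0⟩ := id hne
  set n := Fintype.card V with hn
  have hnpos : 0 < n := Fintype.card_pos
  -- the target divergence function
  set bb : V → ℝ := fun x => if x = p then I else if x = q then -I else 0 with hbb
  -- ## Existence
  -- kernel of the Laplacian is the constants
  have hker : LinearMap.ker (lap G r) = Submodule.span ℝ {(1 : V → ℝ)} := by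
    apply le_antisymm
    · intro φ hφ
      rw [LinearMap.mem_ker] at hφ
      -- the Dirichlet energy vanishes
      have hQ : ∑ x : V, ∑ y : V, (φ x - φ y) ^ 2 * tc G r x y = 0 := by
        have hb : ∑ x : V, ∑ y : V, φ x * ((φ x - φ y) * tc G r x y) = 0 := by
          have : ∀ x : V, ∑ y : V, φ x * ((φ x - φ y) * tc G r x y) = 0 := by
            intro x
            rw [← Finset.mul_sum, ← lap_apply G r φ x, hφ]
            simp
          simp [this]
        have hsplit : ∑ x : V, ∑ y : V, (φ x - φ y) ^ 2 * tc G r x y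
            = (∑ x : V, ∑ y : V, φ x * ((φ x - φ y) * tc G r x y))
              + ∑ x : V, ∑ y : V, φ y * ((φ y - φ x) * tc G r y x) := by
          rw [← Finset.sum_add_distrib]
          refine Finset.sum_congr rfl fun x _ => ?_
          rw [← Finset.sum_add_distrib]
          refine Finset.sum_congr rfl fun y _ => ?_
          rw [tc_symm G r y x]
          ring
        have hswap : ∑ x : V, ∑ y : V, φ y * ((φ y - φ x) * tc G r y x)
            = ∑ x : V, ∑ y : V, φ x * ((φ x - φ y) * tc G r x y) := Finset.sum_comm
        rw [hsplit, hswap, hb]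
        ring
      have hterm : ∀ x y : V, (φ x - φ y) ^ 2 * tc G r x y = 0 := by
        have h1 := (Finset.sum_eq_zero_iff_of_nonneg (fun x _ =>
          Finset.sum_nonneg fun y _ =>
            mul_nonneg (sq_nonneg _) (tc_nonneg G r hr x y))).mp hQ
        intro x y
        have h2 := (Finset.sum_eq_zero_iff_of_nonneg (fun y _ =>
          mul_nonneg (sq_nonneg _) (tc_nonneg G r hr x y))).mp
            (h1 x (Finset.mem_univ x)) y (Finset.mem_univ y)
        exact h2
      have hadj : ∀ x y : V, G.Adj x y → φ x = φ y := by
        intro x y hxy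
        have := hterm x y
        have htc := tc_pos G r hr hxy
        have : (φ x - φ y) ^ 2 = 0 := by
          rcases mul_eq_zero.mp this with h | h
          · exact h
          · exact absurd h (ne_of_gt htc)
        have := pow_eq_zero_iff (n := 2) (by norm_num) |>.mp this
        linarith [sub_eq_zero.mp this]
      have hwalk : ∀ (a b : V) (w : G.Walk a b), φ a = φ b := by
        intro a b w
        induction w with
        | nil => rfl
        | cons ha w ih => rw [hadj _ _ ha]; exact ih
      have hconst : ∀ x : V, φ x = φ v0 := fun x =>
        (hwalk v0 x (hconn.preconnected v0 x).some).symm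
      have : φ = φ v0 • (1 : V → ℝ) := by
        funext x
        simp [hconst x]
      rw [this]
      exact Submodule.smul_mem _ _ (Submodule.mem_span_singleton_self _)
    · rw [Submodule.span_le]
      intro ψ hψ
      simp only [Set.mem_singleton_iff] at hψ
      subst hψ
      rw [SetLike.mem_coe, LinearMap.mem_ker]
      funext x
      rw [lap_apply]
      simp
  -- the image of the Laplacian is the mean-zero functions
  have hle : LinearMap.range (lap G r) ≤ LinearMap.ker (sumF (V := V)) := by
    rintro _ ⟨φ, rfl⟩
    rw [LinearMap.mem_ker]
    show ∑ x, lap G r φ x = 0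
    have : ∀ x, lap G r φ x = ∑ y, (φ x - φ y) * tc G r x y := fun x => rfl
    simp only [this]
    exact sum_antisym_zero _ (fun x y => by rw [tc_symm G r x y]; ring)
  have hone_ne : (1 : V → ℝ) ≠ 0 := fun h => one_ne_zero (congrFun h v0)
  have hkrank : Module.finrank ℝ (LinearMap.ker (lap G r)) = 1 := by
    rw [hker]
    exact finrank_span_singleton hone_ne
  have hpirank : Module.finrank ℝ (V → ℝ) = n := Module.finrank_pi ℝ
  have hrrank : Module.finrank ℝ (LinearMap.range (lap G r)) = n - 1 := by
    have := LinearMap.finrank_range_add_finrank_ker (lap G r)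
    rw [hkrank, hpirank] at this
    omega
  have hsurj : Function.Surjective (sumF (V := V)) := by
    intro c
    refine ⟨fun _ => c / n, ?_⟩
    show ∑ _x : V, c / n = c
    rw [Finset.sum_const, Finset.card_univ]
    rw [nsmul_eq_mul, ← hn]
    have hn0 : (n : ℝ) ≠ 0 := Nat.cast_ne_zero.mpr hnpos.ne'
    field_simp
  have hSrank : Module.finrank ℝ (LinearMap.ker (sumF (V := V))) = n - 1 := by
    have := LinearMap.finrank_range_add_finrank_ker (sumF (V := V))
    rw [LinearMap.range_eq_top.2 hsurj, hpirank] at this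
    rw [finrank_top ℝ ℝ, Module.finrank_self] at this
    omega
  have heq : LinearMap.range (lap G r) = LinearMap.ker (sumF (V := V)) :=
    Submodule.eq_of_le_of_finrank_le hle (by omega)
  -- bb has zero total sum, so it is in the range of the Laplacian
  have hbbmem : bb ∈ LinearMap.ker (sumF (V := V)) := by
    rw [LinearMap.mem_ker]
    show ∑ x, bb x = 0
    have hpt : ∀ x, bb x = (if x = p then I else 0) + (if x = q then -I else 0) := by
      intro x
      by_cases hxp : x = p
      · subst hxp
        simp [hbb, hpq]
      · by_cases hxq : x = q
        · subst hxq; simp [hbb, hxp]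
        · simp [hbb, hxp, hxq]
    simp only [hpt]
    rw [Finset.sum_add_distrib, Finset.sum_ite_eq' Finset.univ p fun _ => I,
      Finset.sum_ite_eq' Finset.univ q fun _ => -I]
    simp
  obtain ⟨φ, hφ⟩ := LinearMap.mem_range.mp (heq ▸ hbbmem)
  -- the electrical current
  set f0 : V → V → ℝ := fun x y => (φ x - φ y) * tc G r x y with hf0
  have hf0flow : IsFlow G p q I f0 ∧ CycleLaw G r f0 := by
    constructor
    · refine ⟨fun x y => by rw [hf0]; simp only; rw [tc_symm G r x y]; ring,
        fun x y hxy => by simp [hf0, tc, hxy], fun x => ?_⟩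
      have hval : ∑ y : (G.neighborSet x), f0 x y = (if x = p then I else if x = q then -I else 0) := by
        rw [Finset.sum_set_coe (f := fun y => f0 x y)]
        have hsub : (G.neighborSet x).toFinset ⊆ Finset.univ := Finset.subset_univ _
        have hzero : ∀ y ∈ Finset.univ, y ∉ (G.neighborSet x).toFinset → f0 x y = 0 := by
          intro y _ hy
          rw [Set.mem_toFinset, SimpleGraph.mem_neighborSet] at hy
          simp [hf0, tc, hy]
        rw [Finset.sum_subset hsub hzero]
        have := congrFun hφ x
        rw [lap_apply] at this
        exact this
      exact hval ▸ hasSum_fintype _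
    · intro v c hc
      rw [← wsum_eq_cycleSum]
      have : wsum (fun x y => f0 x y * r s(x, y)) c = wsum (fun x y => φ x - φ y) c := by
        refine wsum_congr_adj _ _ (fun x y hxy => ?_) c
        have hrpos := hr s(x, y) ((SimpleGraph.mem_edgeSet G).2 hxy)
        rw [hf0]
        simp only [tc, if_pos hxy]
        field_simp
      rw [this, wsum_grad]
      ring
  -- ## Uniqueness
  have huniq : ∀ f1 f2 : V → V → ℝ, (IsFlow G p q I f1 ∧ CycleLaw G r f1) →
      (IsFlow G p q I f2 ∧ CycleLaw G r f2) → f1 = f2 := by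
    rintro f1 f2 ⟨⟨ha1, hz1, hd1⟩, hc1⟩ ⟨⟨ha2, hz2, hd2⟩, hc2⟩
    set g : V → V → ℝ := fun x y => f1 x y - f2 x y with hg
    have gasym : ∀ x y, g x y = - g y x := by
      intro x y; rw [hg]; simp only; rw [ha1 x y, ha2 x y]; ring
    have gz : ∀ x y, ¬ G.Adj x y → g x y = 0 := by
      intro x y hxy; rw [hg]; simp [hz1 x y hxy, hz2 x y hxy]
    have gdiv : ∀ x : V, ∑ y : V, g x y = 0 := by
      intro x
      have hsub := (hd1 x).sub (hd2 x)
      rw [sub_self] at hsub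
      have h0 : ∑ y : (G.neighborSet x), g x y = 0 := by
        have := (hasSum_fintype (fun y : (G.neighborSet x) => g x y)).unique hsub
        exact this
      rw [Finset.sum_set_coe (f := fun y => g x y)] at h0
      rw [← Finset.sum_subset (Finset.subset_univ (G.neighborSet x).toFinset)
        (fun y _ hy => gz x y (by rwa [Set.mem_toFinset, SimpleGraph.mem_neighborSet] at hy))]
      exact h0
    -- the cycle law for g, in wsum form
    set hgr : V → V → ℝ := fun x y => g x y * r s(x, y) with hhgr
    have hgrasym : ∀ x y, hgr x y = - hgr y x := by
      intro x y
      rw [hhgr]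
      simp only
      rw [gasym x y, Sym2.eq_swap]
      ring
    have hgcyc : ∀ (v : V) (c : G.Walk v v), c.IsCycle → wsum hgr c = 0 := by
      intro v c hc
      have e1 := hc1 v c hc
      have e2 := hc2 v c hc
      have : wsum hgr c = wsum (fun x y => f1 x y * r s(x, y)) c
          - wsum (fun x y => f2 x y * r s(x, y)) c := by
        rw [← wsum_sub_fn]
        refine wsum_congr_adj _ _ (fun x y _ => ?_) c
        rw [hhgr, hg]; simp only; ring
      rw [this, wsum_eq_cycleSum, wsum_eq_cycleSum, e1, e2]
      ring
    -- the potential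
    set ψ : V → ℝ := fun x => wsum hgr ((hconn.preconnected v0 x).some) with hψ
    have hgrad : ∀ x y : V, G.Adj x y → ψ y - ψ x = g x y * r s(x, y) := by
      intro x y hxy
      have hindep := wsum_indep hgr hgrasym hgcyc ((hconn.preconnected v0 y).some)
        (((hconn.preconnected v0 x).some).append hxy.toWalk)
      rw [wsum_append] at hindep
      have : wsum hgr hxy.toWalk = hgr x y := by simp [wsum]
      rw [this] at hindep
      rw [hψ]
      simp only
      rw [hindep, hhgr]
      simp only
      ring
    -- the energy of g vanishes
    have hA0 : ∑ x : V, ∑ y : V, (ψ y - ψ x) * g x y = 0 := by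
      have h1 : ∑ x : V, ∑ y : V, ψ x * g x y = 0 := by
        have : ∀ x : V, ∑ y : V, ψ x * g x y = 0 := fun x => by
          rw [← Finset.mul_sum, gdiv x, mul_zero]
        simp [this]
      have h2 : ∑ x : V, ∑ y : V, ψ y * g x y = 0 := by
        have hcomm : ∑ x : V, ∑ y : V, ψ y * g x y = ∑ y : V, ∑ x : V, ψ y * g x y :=
          Finset.sum_comm
        rw [hcomm]
        have : ∀ y : V, ∑ x : V, ψ y * g x y = 0 := by
          intro y
          rw [← Finset.mul_sum]
          have : ∑ x : V, g x y = 0 := by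
            have : ∑ x : V, g x y = ∑ x : V, - g y x := by
              exact Finset.sum_congr rfl fun x _ => gasym x y
            rw [this, Finset.sum_neg_distrib, gdiv y, neg_zero]
          rw [this, mul_zero]
        simp [this]
      have : ∑ x : V, ∑ y : V, (ψ y - ψ x) * g x y
          = (∑ x : V, ∑ y : V, ψ y * g x y) - ∑ x : V, ∑ y : V, ψ x * g x y := by
        rw [← Finset.sum_sub_distrib]
        refine Finset.sum_congr rfl fun x _ => ?_
        rw [← Finset.sum_sub_distrib]
        exact Finset.sum_congr rfl fun y _ => by ring
      rw [this, h1, h2]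
      ring
    have hAnn : ∀ x y : V, 0 ≤ (ψ y - ψ x) * g x y := by
      intro x y
      by_cases hxy : G.Adj x y
      · rw [hgrad x y hxy]
        have : g x y * r s(x, y) * g x y = g x y ^ 2 * r s(x, y) := by ring
        rw [this]
        exact mul_nonneg (sq_nonneg _) (le_of_lt (hr _ ((SimpleGraph.mem_edgeSet G).2 hxy)))
      · rw [gz x y hxy, mul_zero]
    have hAterm : ∀ x y : V, (ψ y - ψ x) * g x y = 0 := by
      have h1 := (Finset.sum_eq_zero_iff_of_nonneg (fun x _ =>
        Finset.sum_nonneg fun y _ => hAnn x y)).mp hA0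
      intro x y
      exact (Finset.sum_eq_zero_iff_of_nonneg (fun y _ => hAnn x y)).mp
        (h1 x (Finset.mem_univ x)) y (Finset.mem_univ y)
    have hgzero : ∀ x y : V, g x y = 0 := by
      intro x y
      by_cases hxy : G.Adj x y
      · have := hAterm x y
        rw [hgrad x y hxy] at this
        have h2 : g x y ^ 2 * r s(x, y) = 0 := by rw [← this]; ring
        have hrpos := hr s(x, y) ((SimpleGraph.mem_edgeSet G).2 hxy)
        rcases mul_eq_zero.mp h2 with h | h
        · exact pow_eq_zero_iff (n := 2) (by norm_num) |>.mp h
        · exact absurd h (ne_of_gt hrpos)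
      · exact gz x y hxy
    funext x y
    have := hgzero x y
    rw [hg] at this
    simp only at this
    linarith
  exact ⟨f0, hf0flow, fun f' hf' => huniq f' f0 hf' hf0flow⟩
end

section
/- Let N=(G,r,p,q,I) be a network in which G is a countable, connected, locally finite simple graph. Then there is a unique cut-respecting flow i of intensity I from p to q of minimum energy; that is, W(i) ≤ W(f) for every cut-respecting flow f of intensity I, and every cut-respecting flow of intensity I attaining this minimum equals i. Moreover, this flow i satisfies Kirchhoff's cycle law. -/
open scoped ENNReal Classical

open scoped RealInnerProductSpace

namespace UMECF

variable {V : Type}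

/-- Index type of ordered adjacent pairs. -/
abbrev D (G : SimpleGraph V) : Type := {e : V × V // G.Adj e.1 e.2}

/-- The weighted `ℓ²` Hilbert space on ordered adjacent pairs. -/
noncomputable abbrev H (G : SimpleGraph V) : Type := lp (fun _ : D G => ℝ) 2

variable (G : SimpleGraph V) (r : Sym2 V → ℝ)

/-- Square root of the resistance of an edge. -/
noncomputable def sr (e : V × V) : ℝ := Real.sqrt (r s(e.1, e.2))

lemma sr_pos (hr : ∀ e ∈ G.edgeSet, 0 < r e) {x y : V} (h : G.Adj x y) :
    0 < sr r (x, y) :=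
  Real.sqrt_pos.2 (hr _ (G.mem_edgeSet.2 h))

lemma sr_sq (hr : ∀ e ∈ G.edgeSet, 0 < r e) {x y : V} (h : G.Adj x y) :
    sr r (x, y) ^ 2 = r s(x, y) :=
  Real.sq_sqrt (hr _ (G.mem_edgeSet.2 h)).le

lemma sr_symm (x y : V) : sr r (y, x) = sr r (x, y) := by
  simp only [sr]
  exact congrArg Real.sqrt (congrArg r (Sym2.eq_swap))

/-- Recover an edge function `V → V → ℝ` from an `ℓ²` element. -/
noncomputable def toF (g : H G) : V → V → ℝ := fun x y =>
  if h : G.Adj x y then g ⟨(x, y), h⟩ / sr r (x, y) else 0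

lemma toF_adj (g : H G) {x y : V} (h : G.Adj x y) :
    toF G r g x y = g ⟨(x, y), h⟩ / sr r (x, y) := dif_pos h

lemma toF_not_adj (g : H G) {x y : V} (h : ¬ G.Adj x y) :
    toF G r g x y = 0 := dif_neg h

lemma toF_e (g : H G) (e : D G) :
    toF G r g e.1.1 e.1.2 = g e / sr r e.1 := by
  rw [toF_adj G r g e.2]

lemma coe_e (g : H G) (e : D G) (hr : ∀ e ∈ G.edgeSet, 0 < r e) :
    g e = toF G r g e.1.1 e.1.2 * sr r e.1 := by
  rw [toF_e, div_mul_cancel₀]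
  exact (sr_pos G r hr e.2).ne'

lemma toF_add (g h : H G) :
    toF G r (g + h) = fun x y => toF G r g x y + toF G r h x y := by
  funext x y
  by_cases hxy : G.Adj x y
  · simp only [toF_adj _ _ _ hxy, lp.coeFn_add, Pi.add_apply, add_div]
  · simp [toF_not_adj _ _ _ hxy]

lemma toF_smul (c : ℝ) (g : H G) :
    toF G r (c • g) = fun x y => c * toF G r g x y := by
  funext x y
  by_cases hxy : G.Adj x y
  · simp only [toF_adj _ _ _ hxy, lp.coeFn_smul, Pi.smul_apply, smul_eq_mul, mul_div_assoc]
  · simp [toF_not_adj _ _ _ hxy]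

lemma toF_zero : toF G r (0 : H G) = fun _ _ => 0 := by
  funext x y
  by_cases hxy : G.Adj x y
  · simp only [toF_adj _ _ _ hxy, lp.coeFn_zero, Pi.zero_apply, zero_div]
  · simp [toF_not_adj _ _ _ hxy]

lemma continuous_eval (e : D G) : Continuous fun g : H G => g e := by
  have : LipschitzWith 1 fun g : H G => g e := by
    refine LipschitzWith.of_dist_le_mul fun g h => ?_
    have h1 : dist (g e) (h e) = ‖(g - h : H G) e‖ := by
      rw [dist_eq_norm, lp.coeFn_sub, Pi.sub_apply]
    rw [h1, dist_eq_norm]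
    simpa using lp.norm_apply_le_norm two_ne_zero (g - h) e
  exact this.continuous

lemma continuous_toF (x y : V) : Continuous fun g : H G => toF G r g x y := by
  by_cases h : G.Adj x y
  · simp only [toF, dif_pos h]
    exact (continuous_eval G _).div_const _
  · simp only [toF, dif_neg h]
    exact continuous_const

variable (hlf : ∀ v : V, (G.neighborSet v).Finite)

/-- Finite node sum at a vertex. -/
noncomputable def nodeSum (f : V → V → ℝ) (x : V) : ℝ :=
  ∑ y ∈ (hlf x).toFinset, f x y

lemma hasSum_iff_nodeSum (f : V → V → ℝ) (x : V) (c : ℝ) :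
    HasSum (fun y : G.neighborSet x => f x y) c ↔ nodeSum G hlf f x = c := by
  letI : Fintype (G.neighborSet x) := (hlf x).fintype
  have h0 : nodeSum G hlf f x = ∑ y : G.neighborSet x, f x y :=
    Finset.sum_subtype _ (fun y => (hlf x).mem_toFinset) _
  constructor
  · intro h
    rw [h0]
    exact (hasSum_fintype _).unique h
  · intro h
    rw [h0] at h
    exact h ▸ hasSum_fintype _

/-- The prescribed divergence of a flow of intensity `I` from `p` to `q`. -/
noncomputable def Ival (p q : V) (I : ℝ) (x : V) : ℝ := if x = p then I else if x = q then -I else 0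

lemma isFlow_toF_iff (p q : V) (I : ℝ) (g : H G) :
    IsFlow G p q I (toF G r g) ↔
      ((∀ x y, toF G r g x y = - toF G r g y x) ∧
       ∀ x, nodeSum G hlf (toF G r g) x = Ival p q I x) := by
  unfold IsFlow Ival
  constructor
  · rintro ⟨h1, _, h3⟩
    exact ⟨h1, fun x => (hasSum_iff_nodeSum G hlf _ x _).1 (h3 x)⟩
  · rintro ⟨h1, h2⟩
    exact ⟨h1, fun x y h => toF_not_adj G r g h,
      fun x => (hasSum_iff_nodeSum G hlf _ x _).2 (h2 x)⟩

/-- The feasible set: elements of `ℓ²` whose associated edge function is a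
cut-respecting flow of intensity `I`. -/
def Kset (p q : V) (I : ℝ) : Set (H G) :=
  {g | IsFlow G p q I (toF G r g) ∧ CutRespecting G p q (toF G r g)}

include hlf in
lemma isClosed_Kset (p q : V) (I : ℝ) : IsClosed (Kset G r p q I) := by
  have hK : Kset G r p q I =
      (⋂ (x : V) (y : V), {g : H G | toF G r g x y = - toF G r g y x}) ∩
      ((⋂ x : V, {g : H G | nodeSum G hlf (toF G r g) x = Ival p q I x}) ∩
       (⋂ Z : {X : Set V // p ∈ X ∧ q ∈ X ∧
           ({e : V × V | e.1 ∈ X ∧ e.2 ∉ X ∧ G.Adj e.1 e.2}).Finite},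
         {g : H G | ∑ e ∈ Z.2.2.2.toFinset, toF G r g e.1 e.2 = 0})) := by
    ext g
    simp only [Kset, Set.mem_setOf_eq, Set.mem_inter_iff, Set.mem_iInter,
      isFlow_toF_iff G r hlf]
    constructor
    · rintro ⟨⟨h1, h2⟩, h3⟩
      exact ⟨fun x => fun y => h1 x y, ⟨h2, fun Z => h3 Z.1 Z.2.1 Z.2.2.1 Z.2.2.2⟩⟩
    · rintro ⟨h1, h2, h3⟩
      exact ⟨⟨h1, h2⟩, fun X hp hq hX => h3 ⟨X, hp, hq, hX⟩⟩
  rw [hK]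
  refine IsClosed.inter ?_ (IsClosed.inter ?_ ?_)
  · exact isClosed_iInter fun x => isClosed_iInter fun y =>
      isClosed_eq (continuous_toF G r x y) (continuous_toF G r y x).neg
  · refine isClosed_iInter fun x => isClosed_eq ?_ continuous_const
    have h : (fun g : H G => nodeSum G hlf (toF G r g) x) =
        fun g : H G => ∑ y ∈ (hlf x).toFinset, toF G r g x y := rfl
    rw [h]
    exact continuous_finset_sum _ fun y _ => continuous_toF G r x y
  · refine isClosed_iInter fun Z => isClosed_eq ?_ continuous_const
    exact continuous_finset_sum _ fun e _ => continuous_toF G r e.1 e.2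

include hlf in
lemma convex_Kset (p q : V) (I : ℝ) : Convex ℝ (Kset G r p q I) := by
  intro g hg h hh a b ha hb hab
  have hsum : toF G r (a • g + b • h) =
      fun x y => a * toF G r g x y + b * toF G r h x y := by
    funext x y
    simp [toF_add, toF_smul]
  rw [Kset, Set.mem_setOf_eq, isFlow_toF_iff G r hlf] at hg hh ⊢
  obtain ⟨⟨hg1, hg2⟩, hg3⟩ := hg
  obtain ⟨⟨hh1, hh2⟩, hh3⟩ := hh
  refine ⟨⟨fun x y => ?_, fun x => ?_⟩, fun X hp hq hX => ?_⟩
  · rw [hsum]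
    dsimp only
    rw [hg1 x y, hh1 x y]
    ring
  · rw [hsum]
    have : nodeSum G hlf (fun x y => a * toF G r g x y + b * toF G r h x y) x
        = a * nodeSum G hlf (toF G r g) x + b * nodeSum G hlf (toF G r h) x := by
      simp [nodeSum, Finset.sum_add_distrib, Finset.mul_sum]
    rw [this, hg2 x, hh2 x, ← add_mul, hab, one_mul]
  · rw [hsum]
    have := hg3 X hp hq hX
    have := hh3 X hp hq hX
    simp only [Finset.sum_add_distrib, ← Finset.mul_sum]
    rw [hg3 X hp hq hX, hh3 X hp hq hX]
    ring

lemma single_apply' (i j : D G) (a : ℝ) :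
    (lp.single 2 i a : H G) j = if j = i then a else 0 := by
  rw [lp.single_apply]
  split
  · rename_i h; subst h; simp
  · simp [Pi.single_apply, *]

/-- The elementary `ℓ²` element corresponding to a dart. -/
noncomputable def stepL (d : G.Dart) : H G :=
  lp.single 2 ⟨d.toProd, d.adj⟩ (sr r d.toProd) -
    lp.single 2 ⟨d.toProd.swap, d.adj.symm⟩ (sr r d.toProd.swap)

lemma stepL_apply (d : G.Dart) (e : D G) :
    (stepL G r d) e =
      (if e.1 = d.toProd then sr r d.toProd else 0) -
      (if e.1 = d.toProd.swap then sr r d.toProd.swap else 0) := by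
  rw [stepL, lp.coeFn_sub, Pi.sub_apply, single_apply', single_apply']
  congr 1
  · congr 1
    exact propext ⟨fun h => congrArg Subtype.val h, fun h => Subtype.ext h⟩
  · congr 1
    exact propext ⟨fun h => congrArg Subtype.val h, fun h => Subtype.ext h⟩

/-- The elementary unit flow along an oriented edge. -/
noncomputable def stepF (a c : V) : V → V → ℝ := fun x y =>
  (if (x, y) = (a, c) then 1 else 0) - (if (x, y) = (c, a) then 1 else 0)

lemma toF_stepL (hr : ∀ e ∈ G.edgeSet, 0 < r e) (d : G.Dart) :
    toF G r (stepL G r d) = stepF d.toProd.1 d.toProd.2 := by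
  obtain ⟨⟨a, c⟩, hadj⟩ := d
  have hac : a ≠ c := hadj.ne
  funext x y
  simp only [Prod.swap_prod_mk]
  by_cases h : G.Adj x y
  · rw [toF_adj _ _ _ h, stepL_apply]
    simp only [Prod.swap_prod_mk, stepF]
    by_cases h1 : (x, y) = (a, c)
    · obtain ⟨rfl, rfl⟩ : x = a ∧ y = c :=
        ⟨congrArg Prod.fst h1, congrArg Prod.snd h1⟩
      simp [hac, Ne.symm hac, div_self (sr_pos G r hr h).ne']
    · by_cases h2 : (x, y) = (c, a)
      · obtain ⟨rfl, rfl⟩ : x = c ∧ y = a :=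
          ⟨congrArg Prod.fst h2, congrArg Prod.snd h2⟩
        simp [hac, Ne.symm hac, neg_div, div_self (sr_pos G r hr h).ne']
      · have h1' : ¬(x = a ∧ y = c) := fun hc => h1 (by rw [hc.1, hc.2])
        have h2' : ¬(x = c ∧ y = a) := fun hc => h2 (by rw [hc.1, hc.2])
        simp [h1, h2, h1', h2', hac, Ne.symm hac]
  · rw [toF_not_adj _ _ _ h]
    have h1 : (x, y) ≠ (a, c) := by
      intro h1; rw [Prod.mk.injEq] at h1
      exact h (by rw [h1.1, h1.2]; exact hadj)
    have h2 : (x, y) ≠ (c, a) := by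
      intro h2; rw [Prod.mk.injEq] at h2
      exact h (by rw [h2.1, h2.2]; exact hadj.symm)
    rw [stepF, if_neg h1, if_neg h2, sub_zero]

/-- Indicator function. -/
noncomputable def ind (a x : V) : ℝ := if x = a then 1 else 0

/-- The properties of the unit flow along a walk from `a` to `b`:
antisymmetry, divergence `δ_a - δ_b`, and net flow `[a ∈ X] - [b ∈ X]`
across every finite cut. -/
def WalkP (a b : V) (f : V → V → ℝ) : Prop :=
  (∀ x y, f x y = - f y x) ∧
  (∀ x, nodeSum G hlf f x = ind a x - ind b x) ∧
  (∀ X : Set V, ∀ hX : ({e : V × V | e.1 ∈ X ∧ e.2 ∉ X ∧ G.Adj e.1 e.2}).Finite,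
    ∑ e ∈ hX.toFinset, f e.1 e.2 =
      (if a ∈ X then (1 : ℝ) else 0) - (if b ∈ X then 1 else 0))

lemma walkP_zero (a : V) : WalkP G hlf a a (fun _ _ => 0) := by
  refine ⟨fun x y => by simp, fun x => by simp [nodeSum], fun X hX => by simp⟩

lemma walkP_add {a b c : V} {f f' : V → V → ℝ} (h1 : WalkP G hlf a c f)
    (h2 : WalkP G hlf c b f') : WalkP G hlf a b (fun x y => f x y + f' x y) := by
  obtain ⟨ha1, ha2, ha3⟩ := h1
  obtain ⟨hb1, hb2, hb3⟩ := h2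
  refine ⟨fun x y => by
    show f x y + f' x y = -(f y x + f' y x)
    rw [ha1 x y, hb1 x y]; ring, fun x => ?_, fun X hX => ?_⟩
  · have h : nodeSum G hlf (fun x y => f x y + f' x y) x
        = nodeSum G hlf f x + nodeSum G hlf f' x := by
      simp [nodeSum, Finset.sum_add_distrib]
    rw [h, ha2 x, hb2 x]
    ring
  · rw [Finset.sum_add_distrib, ha3 X hX, hb3 X hX]
    ring

lemma walkP_stepF {a c : V} (hadj : G.Adj a c) : WalkP G hlf a c (stepF a c) := by
  have hac : a ≠ c := hadj.ne
  refine ⟨?_, ?_, ?_⟩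
  · intro x y
    simp only [stepF, Prod.mk.injEq]
    by_cases h1 : x = a ∧ y = c
    · have h2 : ¬(x = c ∧ y = a) := fun hc => hac (h1.1.symm.trans hc.1)
      have h1' : y = c ∧ x = a := ⟨h1.2, h1.1⟩
      have h2' : ¬(y = a ∧ x = c) := fun hc => h2 ⟨hc.2, hc.1⟩
      simp [h1, h2, h1', h2', hac, Ne.symm hac]
    · by_cases h2 : x = c ∧ y = a
      · have h2'' : y = a ∧ x = c := ⟨h2.2, h2.1⟩
        have h1'' : ¬(y = c ∧ x = a) := fun hc => h1 ⟨hc.2, hc.1⟩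
        simp [h1, h2, h2'', h1'', hac, Ne.symm hac]
      · have ha' : ¬(y = c ∧ x = a) := fun hc => h1 ⟨hc.2, hc.1⟩
        have hb' : ¬(y = a ∧ x = c) := fun hc => h2 ⟨hc.2, hc.1⟩
        simp [h1, h2, ha', hb']
  · intro x
    by_cases hx1 : x = a
    · subst hx1
      have hxc : x ≠ c := hac
      have hstep : ∀ y : V, stepF x c x y = if y = c then 1 else 0 := by
        intro y
        simp [stepF, Prod.mk.injEq, hxc]
      have h : nodeSum G hlf (stepF x c) x
          = ∑ y ∈ (hlf x).toFinset, (if y = c then (1 : ℝ) else 0) := by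
        simp only [nodeSum]
        exact Finset.sum_congr rfl fun y _ => hstep y
      rw [h, Finset.sum_ite_eq' (hlf x).toFinset c (fun _ => (1 : ℝ))]
      have hmem : c ∈ (hlf x).toFinset := by
        rw [Set.Finite.mem_toFinset]
        exact hadj
      simp [hmem, ind, hxc, Ne.symm hxc]
    · by_cases hx2 : x = c
      · subst hx2
        have hax : a ≠ x := hac
        have hstep : ∀ y : V, stepF a x x y = -(if y = a then 1 else 0) := by
          intro y
          simp [stepF, Prod.mk.injEq, Ne.symm hax]
        have h : nodeSum G hlf (stepF a x) x
            = ∑ y ∈ (hlf x).toFinset, -(if y = a then (1 : ℝ) else 0) := by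
          simp only [nodeSum]
          exact Finset.sum_congr rfl fun y _ => hstep y
        rw [h, Finset.sum_neg_distrib,
          Finset.sum_ite_eq' (hlf x).toFinset a (fun _ => (1 : ℝ))]
        have hmem : a ∈ (hlf x).toFinset := by
          rw [Set.Finite.mem_toFinset]
          exact hadj.symm
        simp [hmem, ind, hax, Ne.symm hax]
      · have hstep : ∀ y : V, stepF a c x y = 0 := by
          intro y
          simp [stepF, Prod.mk.injEq, hx1, hx2]
        have h : nodeSum G hlf (stepF a c) x = 0 := by
          simp only [nodeSum]
          rw [Finset.sum_congr rfl fun y _ => hstep y, Finset.sum_const, smul_zero]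
        rw [h]
        simp [ind, hx1, hx2]
  · intro X hX
    have hstep : ∀ e : V × V, stepF a c e.1 e.2 =
        (if e = (a, c) then (1 : ℝ) else 0) - (if e = (c, a) then 1 else 0) := by
      intro e
      simp [stepF]
    rw [Finset.sum_congr rfl fun e _ => hstep e, Finset.sum_sub_distrib,
      Finset.sum_ite_eq' hX.toFinset (a, c) (fun _ => (1 : ℝ)),
      Finset.sum_ite_eq' hX.toFinset (c, a) (fun _ => (1 : ℝ))]
    have hm1 : (a, c) ∈ hX.toFinset ↔ (a ∈ X ∧ c ∉ X) := by
      rw [Set.Finite.mem_toFinset, Set.mem_setOf_eq]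
      exact ⟨fun h => ⟨h.1, h.2.1⟩, fun h => ⟨h.1, h.2, hadj⟩⟩
    have hm2 : (c, a) ∈ hX.toFinset ↔ (c ∈ X ∧ a ∉ X) := by
      rw [Set.Finite.mem_toFinset, Set.mem_setOf_eq]
      exact ⟨fun h => ⟨h.1, h.2.1⟩, fun h => ⟨h.1, h.2, hadj.symm⟩⟩
    by_cases hA : a ∈ X <;> by_cases hC : c ∈ X <;> simp [hm1, hm2, hA, hC]

/-- `ℓ²` element attached to a walk. -/
noncomputable def gWalk {a b : V} (w : G.Walk a b) : H G :=
  (w.darts.map (stepL G r)).sum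

lemma gWalk_nil {a : V} : gWalk G r (SimpleGraph.Walk.nil : G.Walk a a) = 0 := by
  simp [gWalk]

lemma gWalk_cons {a c b : V} (hadj : G.Adj a c) (w : G.Walk c b) :
    gWalk G r (SimpleGraph.Walk.cons hadj w)
      = stepL G r ⟨(a, c), hadj⟩ + gWalk G r w := by
  simp [gWalk, SimpleGraph.Walk.darts_cons]

include hlf in
lemma walkP_gWalk (hr : ∀ e ∈ G.edgeSet, 0 < r e) {a b : V} (w : G.Walk a b) :
    WalkP G hlf a b (toF G r (gWalk G r w)) := by
  induction w with
  | nil =>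
      rw [gWalk_nil, toF_zero]
      exact walkP_zero G hlf _
  | cons h w' ih =>
      rw [gWalk_cons, toF_add]
      have hstep := walkP_stepF G hlf h
      rw [← toF_stepL G r hr ⟨(_, _), h⟩] at hstep
      exact walkP_add G hlf hstep ih

lemma rpow_toReal_two (x : ℝ) : x ^ ((2 : ℝ≥0∞).toReal) = x ^ 2 := by
  rw [ENNReal.toReal_ofNat]
  rw [show ((2 : ℝ)) = ((2 : ℕ) : ℝ) by norm_num, Real.rpow_natCast]

lemma energy_toF (hr : ∀ e ∈ G.edgeSet, 0 < r e) (g : H G) :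
    energy G r (toF G r g) = ENNReal.ofReal (‖g‖ ^ 2) / 2 := by
  have h1 : ∀ e : D G,
      ENNReal.ofReal ((toF G r g) e.1.1 e.1.2 ^ 2 * r s(e.1.1, e.1.2))
        = ENNReal.ofReal (‖g e‖ ^ 2) := by
    rintro ⟨⟨x, y⟩, hxy⟩
    congr 1
    rw [toF_adj _ _ _ hxy, div_pow, ← sr_sq G r hr hxy,
      div_mul_cancel₀ _ (pow_ne_zero 2 (sr_pos G r hr hxy).ne'),
      Real.norm_eq_abs, sq_abs]
  have h2 : Summable fun e : D G => ‖g e‖ ^ 2 := by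
    have h3 := (lp.memℓp g).summable (p := 2) (by norm_num)
    exact (summable_congr fun e => rpow_toReal_two ‖g e‖).mp h3
  have h5 : ∑' e : D G, ‖g e‖ ^ 2 = ‖g‖ ^ 2 := by
    have h6 := lp.norm_rpow_eq_tsum (p := 2) (by norm_num) g
    rw [rpow_toReal_two] at h6
    rw [h6]
    exact tsum_congr fun e => (rpow_toReal_two ‖g e‖).symm
  rw [energy, tsum_congr h1,
    ← ENNReal.ofReal_tsum_of_nonneg (fun e => sq_nonneg _) h2, h5]

lemma exists_repr (hr : ∀ e ∈ G.edgeSet, 0 < r e) (f : V → V → ℝ)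
    (hvan : ∀ x y, ¬ G.Adj x y → f x y = 0) (hE : energy G r f ≠ ⊤) :
    ∃ g : H G, toF G r g = f := by
  have hts : (∑' e : D G,
      ENNReal.ofReal (f e.1.1 e.1.2 ^ 2 * r s(e.1.1, e.1.2))) ≠ ⊤ := by
    intro hc
    apply hE
    rw [energy, hc, ENNReal.top_div_of_ne_top (by norm_num)]
  have hsum0 := ENNReal.summable_toReal hts
  have hnn : ∀ e : D G, 0 ≤ f e.1.1 e.1.2 ^ 2 * r s(e.1.1, e.1.2) := fun e =>
    mul_nonneg (sq_nonneg _) (hr _ (G.mem_edgeSet.2 e.2)).le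
  have hsum1 : Summable fun e : D G => f e.1.1 e.1.2 ^ 2 * r s(e.1.1, e.1.2) := by
    refine (summable_congr fun e => ?_).mp hsum0
    rw [ENNReal.toReal_ofReal (hnn e)]
  have hval : ∀ e : D G, ‖f e.1.1 e.1.2 * sr r e.1‖ ^ ((2 : ℝ≥0∞).toReal)
      = f e.1.1 e.1.2 ^ 2 * r s(e.1.1, e.1.2) := by
    rintro ⟨⟨x, y⟩, hxy⟩
    rw [rpow_toReal_two, Real.norm_eq_abs, sq_abs, mul_pow, sr_sq G r hr hxy]
  have hmem : Memℓp (fun e : D G => f e.1.1 e.1.2 * sr r e.1) 2 :=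
    memℓp_gen ((summable_congr hval).mpr hsum1)
  refine ⟨⟨fun e : D G => f e.1.1 e.1.2 * sr r e.1, hmem⟩, ?_⟩
  funext x y
  by_cases h : G.Adj x y
  · rw [toF_adj _ _ _ h]
    show f x y * sr r (x, y) / sr r (x, y) = f x y
    rw [mul_div_cancel_right₀ _ (sr_pos G r hr h).ne']
  · rw [toF_not_adj _ _ _ h]
    exact (hvan x y h).symm

lemma inner_stepL (hr : ∀ e ∈ G.edgeSet, 0 < r e) (g : H G)
    (hanti : ∀ x y, toF G r g x y = - toF G r g y x) (d : G.Dart) :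
    ⟪g, stepL G r d⟫ = 2 * (toF G r g d.toProd.1 d.toProd.2 * r d.edge) := by
  obtain ⟨⟨a, c⟩, hadj⟩ := d
  have hedge : (SimpleGraph.Dart.mk (a, c) hadj).edge = s(a, c) := rfl
  rw [hedge]
  rw [stepL, inner_sub_right, lp.inner_single_right, lp.inner_single_right]
  simp only [RCLike.inner_apply, conj_trivial, Prod.swap_prod_mk]
  have hc1 := coe_e G r g ⟨(a, c), hadj⟩ hr
  have hc2 := coe_e G r g ⟨(c, a), hadj.symm⟩ hr
  dsimp only at hc1 hc2 ⊢
  rw [hc1, hc2, hanti c a, sr_symm r a c, ← sr_sq G r hr hadj]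
  ring

lemma inner_gWalk (hr : ∀ e ∈ G.edgeSet, 0 < r e) (g : H G)
    (hanti : ∀ x y, toF G r g x y = - toF G r g y x) {a b : V} (w : G.Walk a b) :
    ⟪g, gWalk G r w⟫ =
      2 * (w.darts.map (fun d => toF G r g d.toProd.1 d.toProd.2 * r d.edge)).sum := by
  rw [gWalk]
  induction w.darts with
  | nil => simp
  | cons d L ih =>
      simp only [List.map_cons, List.sum_cons, inner_add_right, ih,
        inner_stepL G r hr g hanti d]
      ring

end UMECF

open UMECF in
/-- In a countable connected locally finite network there is a unique
cut-respecting flow of intensity `I` of minimum energy, and it satisfies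
Kirchhoff's cycle law. -/
theorem unique_minimum_energy_cutRespecting_flow
    {V : Type} [Countable V] (G : SimpleGraph V) (hconn : G.Connected)
    (hlf : ∀ v : V, (G.neighborSet v).Finite)
    (r : Sym2 V → ℝ) (hr : ∀ e ∈ G.edgeSet, 0 < r e)
    (p q : V) (hpq : p ≠ q) (I : ℝ) :
    ∃ i : V → V → ℝ,
      IsFlow G p q I i ∧ CutRespecting G p q i ∧
      (∀ f : V → V → ℝ, IsFlow G p q I f → CutRespecting G p q f →
        energy G r i ≤ energy G r f) ∧
      CycleLaw G r i ∧
      ∀ j : V → V → ℝ, IsFlow G p q I j → CutRespecting G p q j →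
        energy G r j = energy G r i → j = i := by
  classical
  set K := Kset G r p q I with hK
  -- the feasible set is nonempty: a unit flow along a path from p to q, scaled by I
  obtain ⟨w⟩ : Nonempty (G.Walk p q) := hconn.preconnected p q
  obtain ⟨hw1, hw2, hw3⟩ := walkP_gWalk G r hlf hr w
  have hg1 : I • gWalk G r w ∈ K := by
    rw [hK, Kset, Set.mem_setOf_eq, isFlow_toF_iff G r hlf]
    have hsmul : toF G r (I • gWalk G r w)
        = fun x y => I * toF G r (gWalk G r w) x y := toF_smul G r I _
    refine ⟨⟨fun x y => ?_, fun x => ?_⟩, fun X hp hq hX => ?_⟩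
    · rw [hsmul]
      show I * toF G r (gWalk G r w) x y = -(I * toF G r (gWalk G r w) y x)
      rw [hw1 x y]; ring
    · rw [hsmul]
      have hns : nodeSum G hlf (fun x y => I * toF G r (gWalk G r w) x y) x
          = I * nodeSum G hlf (toF G r (gWalk G r w)) x := by
        simp [nodeSum, Finset.mul_sum]
      rw [hns, hw2 x, Ival, ind, ind]
      by_cases h1 : x = p
      · subst h1
        simp [hpq]
      · by_cases h2 : x = q
        · subst h2
          simp [h1]
        · simp [h1, h2]
    · rw [hsmul]
      have : ∑ e ∈ hX.toFinset, (fun x y => I * toF G r (gWalk G r w) x y) e.1 e.2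
          = I * ∑ e ∈ hX.toFinset, toF G r (gWalk G r w) e.1 e.2 := by
        rw [Finset.mul_sum]
      rw [this, hw3 X hX]
      simp [hp, hq]
  obtain ⟨g0, hg0K, hg0min⟩ := exists_norm_eq_iInf_of_complete_convex
    ⟨_, hg1⟩ (isClosed_Kset G r hlf p q I).isComplete (convex_Kset G r hlf p q I) 0
  have hmin : ∀ g ∈ K, ‖g0‖ ≤ ‖g‖ := by
    intro g hg
    have h2 : (⨅ w : K, ‖(0 : H G) - w‖) ≤ ‖(0 : H G) - g‖ :=
      ciInf_le ⟨0, by rintro x ⟨w0, rfl⟩; exact norm_nonneg _⟩ (⟨g, hg⟩ : K)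
    calc ‖g0‖ = ‖(0 : H G) - g0‖ := by rw [zero_sub, norm_neg]
    _ = ⨅ w : K, ‖(0 : H G) - w‖ := hg0min
    _ ≤ ‖(0 : H G) - g‖ := h2
    _ = ‖g‖ := by rw [zero_sub, norm_neg]
  have hg0flow : IsFlow G p q I (toF G r g0) := hg0K.1
  have hg0cut : CutRespecting G p q (toF G r g0) := hg0K.2
  have hEi : energy G r (toF G r g0) = ENNReal.ofReal (‖g0‖ ^ 2) / 2 :=
    energy_toF G r hr g0
  refine ⟨toF G r g0, hg0flow, hg0cut, ?_, ?_, ?_⟩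
  · -- minimality
    intro f hf hcut
    by_cases hE : energy G r f = ⊤
    · rw [hE]; exact le_top
    · obtain ⟨gf, hgf⟩ := exists_repr G r hr f hf.2.1 hE
      have hgfK : gf ∈ K := by
        rw [hK, Kset, Set.mem_setOf_eq, hgf]
        exact ⟨hf, hcut⟩
      have hle := hmin gf hgfK
      rw [← hgf, hEi, energy_toF G r hr gf]
      exact ENNReal.div_le_div_right (ENNReal.ofReal_le_ofReal
        (pow_le_pow_left₀ (norm_nonneg _) hle 2)) 2
  · -- cycle law
    intro v c _
    obtain ⟨c1, c2, c3⟩ := walkP_gWalk G r hlf hr c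
    have hmem : ∀ t : ℝ, g0 + t • gWalk G r c ∈ K := by
      intro t
      rw [hK, Kset, Set.mem_setOf_eq, isFlow_toF_iff G r hlf]
      have hrep : toF G r (g0 + t • gWalk G r c)
          = fun x y => toF G r g0 x y + t * toF G r (gWalk G r c) x y := by
        funext x y
        simp [toF_add, toF_smul]
      have hK0 : g0 ∈ Kset G r p q I := hg0K
      rw [Kset, Set.mem_setOf_eq, isFlow_toF_iff G r hlf] at hK0
      obtain ⟨⟨k1, k2⟩, k3⟩ := hK0
      refine ⟨⟨fun x y => ?_, fun x => ?_⟩, fun X hp hq hX => ?_⟩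
      · rw [hrep]
        show toF G r g0 x y + t * toF G r (gWalk G r c) x y
            = -(toF G r g0 y x + t * toF G r (gWalk G r c) y x)
        rw [k1 x y, c1 x y]; ring
      · rw [hrep]
        have hns : nodeSum G hlf
            (fun x y => toF G r g0 x y + t * toF G r (gWalk G r c) x y) x
            = nodeSum G hlf (toF G r g0) x
              + t * nodeSum G hlf (toF G r (gWalk G r c)) x := by
          simp [nodeSum, Finset.sum_add_distrib, Finset.mul_sum]
        rw [hns, k2 x, c2 x]
        ring
      · rw [hrep]
        have hcs : ∑ e ∈ hX.toFinset,
            (toF G r g0 e.1 e.2 + t * toF G r (gWalk G r c) e.1 e.2)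
            = (∑ e ∈ hX.toFinset, toF G r g0 e.1 e.2)
              + t * ∑ e ∈ hX.toFinset, toF G r (gWalk G r c) e.1 e.2 := by
          rw [Finset.sum_add_distrib, Finset.mul_sum]
        rw [hcs, k3 X hp hq hX, c3 X hX]
        ring
    have horth : ⟪g0, gWalk G r c⟫ = 0 := by
      have key : ∀ t : ℝ, 0 ≤ 2 * (t * ⟪g0, gWalk G r c⟫) + t ^ 2 * ‖gWalk G r c‖ ^ 2 := by
        intro t
        have h1 := hmin _ (hmem t)
        have h2 : ‖g0 + t • gWalk G r c‖ ^ 2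
            = ‖g0‖ ^ 2 + 2 * (t * ⟪g0, gWalk G r c⟫) + t ^ 2 * ‖gWalk G r c‖ ^ 2 := by
          rw [norm_add_sq_real, real_inner_smul_right, norm_smul, mul_pow,
            Real.norm_eq_abs, sq_abs]
        nlinarith [pow_le_pow_left₀ (norm_nonneg g0) h1 2]
      have hB : (0 : ℝ) ≤ ‖gWalk G r c‖ ^ 2 := sq_nonneg _
      by_cases hB0 : ‖gWalk G r c‖ ^ 2 = 0
      · have k1 := key 1
        have k2 := key (-1)
        rw [hB0] at k1 k2
        nlinarith [k1, k2]
      · have hBpos : 0 < ‖gWalk G r c‖ ^ 2 := lt_of_le_of_ne hB (Ne.symm hB0)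
        have hk := key (-⟪g0, gWalk G r c⟫ / ‖gWalk G r c‖ ^ 2)
        have hexp : 2 * ((-⟪g0, gWalk G r c⟫ / ‖gWalk G r c‖ ^ 2) * ⟪g0, gWalk G r c⟫)
            + (-⟪g0, gWalk G r c⟫ / ‖gWalk G r c‖ ^ 2) ^ 2 * ‖gWalk G r c‖ ^ 2
            = -(⟪g0, gWalk G r c⟫ ^ 2) / ‖gWalk G r c‖ ^ 2 := by
          field_simp
          ring
        rw [hexp] at hk
        have h6 := mul_le_mul_of_nonneg_right hk hBpos.le
        rw [zero_mul, div_mul_cancel₀ _ hBpos.ne'] at h6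
        have h3 : ⟪g0, gWalk G r c⟫ ^ 2 = 0 :=
          le_antisymm (by linarith) (sq_nonneg _)
        exact pow_eq_zero_iff two_ne_zero |>.mp h3
    have h2S := inner_gWalk G r hr g0 hg0flow.1 c
    rw [horth] at h2S
    linarith
  · -- uniqueness
    intro j hj hcutj hEj
    have hEj' : energy G r j ≠ ⊤ := by
      rw [hEj, hEi]
      exact (ENNReal.div_lt_top ENNReal.ofReal_ne_top (by norm_num)).ne
    obtain ⟨gj, hgj⟩ := exists_repr G r hr j hj.2.1 hEj'
    have hgjK : gj ∈ K := by
      rw [hK, Kset, Set.mem_setOf_eq, hgj]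
      exact ⟨hj, hcutj⟩
    have hnorm : ‖gj‖ = ‖g0‖ := by
      have h1 : energy G r j = ENNReal.ofReal (‖gj‖ ^ 2) / 2 := by
        rw [← hgj]; exact energy_toF G r hr gj
      rw [h1, hEi] at hEj
      have h2 : ENNReal.ofReal (‖gj‖ ^ 2) = ENNReal.ofReal (‖g0‖ ^ 2) := by
        have h3 := congrArg (· * 2) hEj
        rwa [ENNReal.div_mul_cancel (by norm_num) (by norm_num),
          ENNReal.div_mul_cancel (by norm_num) (by norm_num)] at h3
      rw [ENNReal.ofReal_eq_ofReal_iff (sq_nonneg _) (sq_nonneg _)] at h2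
      have h4 := congrArg Real.sqrt h2
      rwa [Real.sqrt_sq (norm_nonneg _), Real.sqrt_sq (norm_nonneg _)] at h4
    have hmid : (1/2 : ℝ) • gj + (1/2 : ℝ) • g0 ∈ K :=
      convex_Kset G r hlf p q I hgjK hg0K (by norm_num) (by norm_num) (by norm_num)
    have hm := hmin _ hmid
    have hpar := parallelogram_law_with_norm ℝ gj g0
    have hsumnorm : ‖gj + g0‖ = 2 * ‖(1/2 : ℝ) • gj + (1/2 : ℝ) • g0‖ := by
      have hid : (2 : ℝ) • ((1/2 : ℝ) • gj + (1/2 : ℝ) • g0) = gj + g0 := by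
        rw [smul_add, smul_smul, smul_smul]
        norm_num
      rw [← hid, norm_smul, Real.norm_eq_abs]
      norm_num
    have hmm : ‖g0‖ * ‖g0‖
        ≤ ‖(1/2 : ℝ) • gj + (1/2 : ℝ) • g0‖ * ‖(1/2 : ℝ) • gj + (1/2 : ℝ) • g0‖ :=
      mul_le_mul hm hm (norm_nonneg _) (norm_nonneg _)
    have h5 : ‖gj + g0‖ * ‖gj + g0‖
        = 4 * (‖(1/2 : ℝ) • gj + (1/2 : ℝ) • g0‖ * ‖(1/2 : ℝ) • gj + (1/2 : ℝ) • g0‖) := by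
      rw [hsumnorm]; ring
    have h7 : ‖gj‖ * ‖gj‖ = ‖g0‖ * ‖g0‖ := by rw [hnorm]
    have hsq : ‖gj - g0‖ * ‖gj - g0‖ ≤ 0 := by linarith [hpar, hmm, h5, h7]
    have h8 : ‖gj - g0‖ * ‖gj - g0‖ = 0 := le_antisymm hsq (mul_self_nonneg _)
    have h9 : ‖gj - g0‖ = 0 := mul_self_eq_zero.mp h8
    have hz0 : gj = g0 := by rwa [norm_sub_eq_zero_iff] at h9
    rw [← hgj, hz0]
end

section
/- Let X be a Hausdorff topological space and let σ : [0,1] → X be a continuous map with σ(0) ≠ σ(1). Then there exist an injective continuous map τ : [0,1] → X and a strictly increasing function m : [0,1] → [0,1] such that τ(x) = σ(m(x)) for every x ∈ [0,1]; in particular τ(0) = σ(0) and τ(1) = σ(1). -/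
open Set MeasureTheory Filter Topology
open scoped ENNReal

namespace ShortcutAux


/-- binary digits of a real number in `[0,1)` -/
noncomputable def dig (x : ℝ) (n : ℕ) : Bool := decide (⌊x * 2 ^ (n + 1)⌋ % 2 = 1)

lemma measurable_dig : Measurable dig := by
  apply measurable_pi_lambda
  intro n
  have h1 : Measurable fun x : ℝ => ⌊x * 2 ^ (n + 1)⌋ :=
    Int.measurable_floor.comp (measurable_id.mul_const _)
  exact (measurable_of_countable (fun k : ℤ => decide (k % 2 = 1))).comp h1

lemma dig_floor_eq {x y : ℝ} (hx : x ∈ Ico (0:ℝ) 1) (hy : y ∈ Ico (0:ℝ) 1)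
    (h : dig x = dig y) : ∀ n : ℕ, ⌊x * 2 ^ n⌋ = ⌊y * 2 ^ n⌋ := by
  intro n
  induction n with
  | zero =>
    simp only [pow_zero, mul_one]
    rw [Int.floor_eq_zero_iff.2 ⟨hx.1, hx.2⟩, Int.floor_eq_zero_iff.2 ⟨hy.1, hy.2⟩]
  | succ n ih =>
    set k := ⌊x * 2 ^ n⌋ with hk
    have hxk : (k : ℝ) ≤ x * 2 ^ n ∧ x * 2 ^ n < k + 1 := ⟨Int.floor_le _, Int.lt_floor_add_one _⟩
    have hyk : (k : ℝ) ≤ y * 2 ^ n ∧ y * 2 ^ n < k + 1 := by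
      have h' : k = ⌊y * 2 ^ n⌋ := ih
      rw [h']; exact ⟨Int.floor_le _, Int.lt_floor_add_one _⟩
    have hx2 : (2 * k : ℤ) ≤ ⌊x * 2 ^ (n+1)⌋ ∧ ⌊x * 2 ^ (n+1)⌋ < 2 * k + 2 := by
      constructor
      · apply Int.le_floor.2; push_cast; rw [pow_succ]; nlinarith [hxk.1]
      · apply Int.floor_lt.2; push_cast; rw [pow_succ]; nlinarith [hxk.2]
    have hy2 : (2 * k : ℤ) ≤ ⌊y * 2 ^ (n+1)⌋ ∧ ⌊y * 2 ^ (n+1)⌋ < 2 * k + 2 := by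
      constructor
      · apply Int.le_floor.2; push_cast; rw [pow_succ]; nlinarith [hyk.1]
      · apply Int.floor_lt.2; push_cast; rw [pow_succ]; nlinarith [hyk.2]
    have hd : (⌊x * 2 ^ (n+1)⌋ % 2 = 1) ↔ (⌊y * 2 ^ (n+1)⌋ % 2 = 1) := by
      have := congrFun h n
      simpa [dig, decide_eq_decide] using this
    omega

lemma dig_injOn : InjOn dig (Ico (0:ℝ) 1) := by
  intro x hx y hy h
  by_contra hne
  have habs : ∀ n : ℕ, |x - y| < ((2:ℝ)⁻¹) ^ n := by
    intro n
    have hf := dig_floor_eq hx hy h n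
    have h1 : (⌊x * 2 ^ n⌋ : ℝ) ≤ x * 2 ^ n ∧ x * 2 ^ n < ⌊x * 2 ^ n⌋ + 1 :=
      ⟨Int.floor_le _, Int.lt_floor_add_one _⟩
    have h2 : (⌊x * 2 ^ n⌋ : ℝ) ≤ y * 2 ^ n ∧ y * 2 ^ n < ⌊x * 2 ^ n⌋ + 1 := by
      rw [hf]; exact ⟨Int.floor_le _, Int.lt_floor_add_one _⟩
    have hp : (0:ℝ) < 2 ^ n := by positivity
    rw [abs_sub_lt_iff]
    have hpow : ((2:ℝ)⁻¹) ^ n = (2 ^ n)⁻¹ := by rw [inv_pow]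
    rw [hpow]
    constructor <;>
      · rw [show ((2:ℝ)^n)⁻¹ = 1/2^n from (one_div _).symm, lt_div_iff₀ hp]
        nlinarith [h1.1, h1.2, h2.1, h2.2]
  obtain ⟨n, hn⟩ := exists_pow_lt_of_lt_one (abs_pos.2 (sub_ne_zero.2 hne)) (by norm_num : (2:ℝ)⁻¹ < 1)
  exact absurd (habs n) (not_lt.2 hn.le)

/-- the coin-flipping measure on Cantor space -/
noncomputable def coin : Measure (ℕ → Bool) := Measure.map dig (volume.restrict (Ico 0 1))

lemma coin_apply {S : Set (ℕ → Bool)} (hS : MeasurableSet S) :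
    coin S = volume (dig ⁻¹' S ∩ Ico 0 1) := by
  rw [coin, Measure.map_apply measurable_dig hS, Measure.restrict_apply (measurable_dig hS)]

lemma coin_univ : coin univ = 1 := by
  rw [coin_apply MeasurableSet.univ]; simp

lemma coin_subsingleton {S : Set (ℕ → Bool)} (hS : S.Subsingleton) : coin S = 0 := by
  rcases S.eq_empty_or_nonempty with rfl | ⟨b, hb⟩
  · simp
  · have hSb : S ⊆ {b} := fun c hc => hS hc hb
    have hmb : MeasurableSet ({b} : Set (ℕ → Bool)) := MeasurableSet.singleton b
    have h1 : coin {b} = 0 := by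
      rw [coin_apply hmb]
      have : (dig ⁻¹' {b} ∩ Ico 0 1).Subsingleton := by
        intro u hu v hv
        exact dig_injOn hu.2 hv.2 (hu.1.trans hv.1.symm)
      exact this.measure_zero _
    exact le_antisymm (le_trans (measure_mono hSb) h1.le) (zero_le)

/-- every nonempty perfect subset of `ℝ` carries an atomless probability measure -/
lemma exists_measure_on_perfect {S : Set ℝ} (hS : Perfect S) (hne : S.Nonempty) :
    ∃ ν : Measure ℝ, ν univ = 1 ∧ (∀ c : ℝ, ν {c} = 0) ∧ ν Sᶜ = 0 := by
  obtain ⟨f, hrange, hcont, hinj⟩ := hS.exists_nat_bool_injection hne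
  refine ⟨Measure.map f coin, ?_, ?_, ?_⟩
  · rw [Measure.map_apply hcont.measurable MeasurableSet.univ]
    simpa using coin_univ
  · intro c
    rw [Measure.map_apply hcont.measurable (MeasurableSet.singleton c)]
    exact coin_subsingleton fun u hu v hv => hinj (hu.trans hv.symm)
  · rw [Measure.map_apply hcont.measurable hS.closed.measurableSet.compl]
    have : f ⁻¹' Sᶜ = ∅ := by
      ext u; simp only [mem_preimage, mem_compl_iff, mem_empty_iff_false, iff_false, not_not]
      exact hrange (mem_range_self u)
    rw [this]; simp



set_option linter.unusedSectionVars false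

variable {X : Type} [TopologicalSpace X] [T2Space X]

/-- admissible closed subsets of `[0,1]` for the path `f` -/
structure Good (f : ℝ → X) (A : Set ℝ) : Prop where
  subset : A ⊆ Icc 0 1
  closed : IsClosed A
  zero : (0:ℝ) ∈ A
  one : (1:ℝ) ∈ A
  gap : ∀ a b, a ∈ A → b ∈ A → a < b → Ioo a b ∩ A = ∅ → f a = f b

lemma Good.compact {f : ℝ → X} {A : Set ℝ} (hA : Good f A) : IsCompact A :=
  isCompact_Icc.of_isClosed_subset hA.closed hA.subset

lemma exists_minimal_good (f : ℝ → X) (hf : Continuous f) :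
    ∃ A, Good f A ∧ ∀ B, Good f B → B ⊆ A → B = A := by
  have hIcc : Good f (Icc 0 1) :=
    ⟨Subset.rfl, isClosed_Icc, by norm_num, by norm_num, by
      intro a b ha hb hab hgap
      have : a + (b - a)/2 ∈ Ioo a b ∩ Icc 0 1 := by
        refine ⟨⟨by linarith, by linarith⟩, by linarith [ha.1], by linarith [hb.2]⟩
      rw [hgap] at this; exact absurd this (notMem_empty _)⟩
  have Hchain : ∀ c ⊆ {A | Good f A}, IsChain (· ⊆ ·) c → c.Nonempty →
      ∃ lb ∈ {A | Good f A}, ∀ s ∈ c, lb ⊆ s := by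
    rintro C hCsub hchain ⟨A₀, hA₀⟩
    refine ⟨⋂₀ C, ?_, fun A hA => sInter_subset_of_mem hA⟩
    have hCgood : ∀ A ∈ C, Good f A := fun A hA => hCsub hA
    refine ⟨?_, ?_, ?_, ?_, ?_⟩
    · exact (sInter_subset_of_mem hA₀).trans (hCgood _ hA₀).subset
    · exact isClosed_sInter fun A hA => (hCgood _ hA).closed
    · exact fun A hA => (hCgood _ hA).zero
    · exact fun A hA => (hCgood _ hA).one
    · intro a b ha hb hab hgap
      by_contra hne
      obtain ⟨U, V, hU, hV, hfaU, hfbV, hUV⟩ := t2_separation hne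
      set Wa := f ⁻¹' U with hWa
      set Wb := f ⁻¹' V with hWb
      have hWao : IsOpen Wa := hU.preimage hf
      have hWbo : IsOpen Wb := hV.preimage hf
      have hWdisj : Wa ∩ Wb = ∅ := by
        rw [hWa, hWb, ← preimage_inter]
        rw [disjoint_iff_inter_eq_empty] at hUV
        rw [hUV]; simp
      haveI : Nonempty C := ⟨⟨A₀, hA₀⟩⟩
      have key : ∃ A : C, (A : Set ℝ) ∩ Icc a b ⊆ Wa ∪ Wb := by
        apply exists_subset_nhds_of_isCompact' (V := fun A : C => (A : Set ℝ) ∩ Icc a b)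
        · intro A B
          rcases hchain.total A.2 B.2 with h | h
          · exact ⟨A, Subset.rfl, inter_subset_inter_left _ h⟩
          · exact ⟨B, inter_subset_inter_left _ h, Subset.rfl⟩
        · exact fun A => ((hCgood _ A.2).compact.inter_right isClosed_Icc)
        · exact fun A => (hCgood _ A.2).closed.inter isClosed_Icc
        · intro x hx
          have hx' : x ∈ ⋂₀ C ∩ Icc a b := by
            simp only [mem_iInter] at hx
            exact ⟨fun A hA => (hx ⟨A, hA⟩).1, (hx ⟨A₀, hA₀⟩).2⟩
          have hxab : x = a ∨ x = b := by
            rcases eq_or_lt_of_le hx'.2.1 with h | h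
            · exact Or.inl h.symm
            rcases eq_or_lt_of_le hx'.2.2 with h' | h'
            · exact Or.inr h'
            · exfalso
              have : x ∈ Ioo a b ∩ ⋂₀ C := ⟨⟨h, h'⟩, hx'.1⟩
              rw [hgap] at this; exact this
          have : x ∈ Wa ∪ Wb := by
            rcases hxab with rfl | rfl
            · exact Or.inl hfaU
            · exact Or.inr hfbV
          exact (hWao.union hWbo).mem_nhds this
      obtain ⟨⟨A, hAC⟩, hKA⟩ := key
      have hAgood := hCgood A hAC
      have haA : a ∈ A := (sInter_subset_of_mem hAC) ha
      have hbA : b ∈ A := (sInter_subset_of_mem hAC) hb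
      set K := A ∩ Icc a b with hK
      have hKa : K ∩ Wa = K \ Wb := by
        ext x
        simp only [mem_inter_iff, mem_diff, and_congr_right_iff]
        intro hxK
        constructor
        · intro hxa hxb
          have : x ∈ Wa ∩ Wb := ⟨hxa, hxb⟩
          rw [hWdisj] at this; exact this
        · intro hxb
          rcases hKA hxK with h | h
          · exact h
          · exact absurd h hxb
      have hKclosed : IsClosed K := hAgood.closed.inter isClosed_Icc
      have hKaclosed : IsClosed (K ∩ Wa) := by
        rw [hKa]; exact hKclosed.sdiff hWbo
      have haKa : a ∈ K ∩ Wa := ⟨⟨haA, le_refl a, hab.le⟩, hfaU⟩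
      have hbd : BddAbove (K ∩ Wa) := ⟨b, fun x hx => hx.1.2.2⟩
      set c := sSup (K ∩ Wa) with hc
      have hcmem : c ∈ K ∩ Wa := hKaclosed.csSup_mem ⟨a, haKa⟩ hbd
      have hcb : c < b := by
        rcases eq_or_lt_of_le hcmem.1.2.2 with h | h
        · exfalso
          have : b ∈ Wa ∩ Wb := ⟨h ▸ hcmem.2, hfbV⟩
          rw [hWdisj] at this; exact this
        · exact h
      set L := K ∩ Wb ∩ Ici c with hL
      have hLclosed : IsClosed L := by
        have : K ∩ Wb = K \ Wa := by
          ext x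
          simp only [mem_inter_iff, mem_diff, and_congr_right_iff]
          intro hxK
          constructor
          · intro hxb hxa
            have : x ∈ Wa ∩ Wb := ⟨hxa, hxb⟩
            rw [hWdisj] at this; exact this
          · intro hxa
            rcases hKA hxK with h | h
            · exact absurd h hxa
            · exact h
        rw [hL, this]
        exact (hKclosed.sdiff hWao).inter isClosed_Ici
      have hbL : b ∈ L := ⟨⟨⟨hbA, hab.le, le_refl b⟩, hfbV⟩, hcb.le⟩
      set d := sInf L with hd
      have hLbdd : BddBelow L := ⟨c, fun x hx => hx.2⟩
      have hdmem : d ∈ L := hLclosed.csInf_mem ⟨b, hbL⟩ hLbdd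
      have hcd : c < d := by
        rcases eq_or_lt_of_le (mem_Ici.1 hdmem.2) with h | h
        · exfalso
          have : c ∈ Wa ∩ Wb := ⟨hcmem.2, h ▸ hdmem.1.2⟩
          rw [hWdisj] at this; exact this
        · exact h
      have hgap2 : Ioo c d ∩ A = ∅ := by
        ext x
        simp only [mem_inter_iff, mem_Ioo, mem_empty_iff_false, iff_false, not_and, and_imp]
        intro hcx hxd hxA
        have hxK : x ∈ K := ⟨hxA, hcmem.1.2.1.trans hcx.le, hxd.le.trans hdmem.1.1.2.2⟩
        rcases hKA hxK with h | h
        · exact absurd (le_csSup hbd ⟨hxK, h⟩) (not_le.2 hcx)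
        · exact absurd (csInf_le hLbdd ⟨⟨hxK, h⟩, hcx.le⟩) (not_le.2 hxd)
      have := hAgood.gap c d hcmem.1.1 hdmem.1.1.1 hcd hgap2
      have : f c ∈ U ∩ V := ⟨hcmem.2, this ▸ hdmem.1.2⟩
      rw [(disjoint_iff_inter_eq_empty.1 hUV)] at this
      exact this
  obtain ⟨A, hAx, hmin⟩ := zorn_superset_nonempty {A | Good f A} Hchain (Icc 0 1) hIcc
  exact ⟨A, hmin.1, fun B hB hBA => subset_antisymm hBA (hmin.2 hB hBA)⟩

/-- key property of a minimal admissible set -/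
lemma minimal_P {f : ℝ → X} {A : Set ℝ} (hA : Good f A)
    (hmin : ∀ B, Good f B → B ⊆ A → B = A)
    {a b : ℝ} (ha : a ∈ A) (hb : b ∈ A) (hab : a < b) (hfab : f a = f b) :
    Ioo a b ∩ A = ∅ := by
  have h01 : ∀ x, x ∈ Ioo a b → x ∉ ({0, 1} : Set ℝ) → True := fun _ _ _ => trivial
  have hA' : Good f (A \ Ioo a b) := by
    refine ⟨(diff_subset).trans hA.subset, hA.closed.sdiff isOpen_Ioo, ?_, ?_, ?_⟩
    · exact ⟨hA.zero, fun h => absurd (hA.subset ha).1 (by push_neg; exact h.1)⟩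
    · exact ⟨hA.one, fun h => absurd (hA.subset hb).2 (by push_neg; exact h.2)⟩
    · intro u v hu hv huv hgap
      by_cases hcase : Ioo u v ∩ A = ∅
      · exact hA.gap u v hu.1 hv.1 huv hcase
      · obtain ⟨x, hx⟩ := nonempty_iff_ne_empty.2 hcase
        have hxab : x ∈ Ioo a b := by
          by_contra hxab
          have : x ∈ Ioo u v ∩ (A \ Ioo a b) := ⟨hx.1, hx.2, hxab⟩
          rw [hgap] at this; exact this
        have haIcc : a ∉ Ioo u v := fun h => by
          have : a ∈ Ioo u v ∩ (A \ Ioo a b) := ⟨h, ha, fun h' => lt_irrefl a h'.1⟩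
          rw [hgap] at this; exact this
        have hbIcc : b ∉ Ioo u v := fun h => by
          have : b ∈ Ioo u v ∩ (A \ Ioo a b) := ⟨h, hb, fun h' => lt_irrefl b h'.2⟩
          rw [hgap] at this; exact this
        have hau : a ≤ u := by
          by_contra h
          push_neg at h
          exact haIcc ⟨h, hxab.1.trans hx.1.2⟩
        have hvb : v ≤ b := by
          by_contra h
          push_neg at h
          exact hbIcc ⟨hx.1.1.trans hxab.2, h⟩
        have hua : u = a := by
          have : u ∉ Ioo a b := hu.2
          rcases eq_or_lt_of_le hau with h | h
          · exact h.symm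
          · exact absurd ⟨h, hx.1.1.trans hxab.2⟩ this
        have hvb' : v = b := by
          have : v ∉ Ioo a b := hv.2
          rcases eq_or_lt_of_le hvb with h | h
          · exact h
          · exact absurd ⟨hxab.1.trans hx.1.2, h⟩ this
        rw [hua, hvb']; exact hfab
  have := hmin _ hA' diff_subset
  have hsub : Ioo a b ∩ A ⊆ A \ (A \ Ioo a b) := fun x hx => ⟨hx.2, fun h => h.2 hx.1⟩
  rw [this] at hsub
  simpa using eq_empty_of_subset_empty (by simpa using hsub)

/-- points of a minimal admissible set in `(0,1)` are not isolated -/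
lemma not_isolated {f : ℝ → X} {A : Set ℝ} (hA : Good f A)
    (hmin : ∀ B, Good f B → B ⊆ A → B = A)
    {x : ℝ} (hx : x ∈ A) (hx0 : 0 < x) (hx1 : x < 1) :
    ∀ ε > 0, ∃ y ∈ A, y ≠ x ∧ |y - x| < ε := by
  intro ε hε
  by_contra hiso
  push_neg at hiso
  have hisol : A ∩ Ioo (x - ε) (x + ε) = {x} := by
    apply Subset.antisymm
    · rintro y ⟨hyA, hy1, hy2⟩
      by_contra hne
      simp only [mem_singleton_iff] at hne
      exact absurd (abs_sub_lt_iff.2 ⟨by linarith, by linarith⟩) (not_lt.2 (hiso y hyA hne))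
    · rintro y rfl
      exact ⟨hx, by linarith, by linarith⟩
  -- largest element of A below x
  have hlo : (A ∩ Iio x).Nonempty := ⟨0, hA.zero, hx0⟩
  have hlobdd : BddAbove (A ∩ Iio x) := ⟨x, fun z hz => hz.2.le⟩
  set a := sSup (A ∩ Iio x) with hadef
  have haA : a ∈ A := by
    have := csSup_mem_closure hlo hlobdd
    exact hA.closed.closure_subset ((closure_mono inter_subset_left) this)
  have hax : a < x := by
    rcases eq_or_lt_of_le (csSup_le hlo fun z hz => hz.2.le) with h | h
    · exfalso
      -- then a = x; but elements of A ∩ Iio x must avoid (x-ε, x), so sSup ≤ x - ε... unless none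
      have hub : ∀ z ∈ A ∩ Iio x, z ≤ x - ε := by
        intro z hz
        by_contra hzc
        push_neg at hzc
        have hzx : z < x := mem_Iio.1 hz.2
        have : z ∈ A ∩ Ioo (x - ε) (x + ε) := ⟨hz.1, hzc, by linarith⟩
        rw [hisol, mem_singleton_iff] at this
        exact (ne_of_lt hzx) this
      have := csSup_le hlo hub
      rw [h] at this; linarith
    · exact h
  have hgapa : Ioo a x ∩ A = ∅ := by
    ext z
    simp only [mem_inter_iff, mem_Ioo, mem_empty_iff_false, iff_false, not_and, and_imp]
    intro haz hzx hzA
    exact absurd (le_csSup hlobdd ⟨hzA, hzx⟩) (not_le.2 haz)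
  have hfa : f a = f x := hA.gap a x haA hx hax hgapa
  -- smallest element of A above x
  have hhi : (A ∩ Ioi x).Nonempty := ⟨1, hA.one, hx1⟩
  have hhibdd : BddBelow (A ∩ Ioi x) := ⟨x, fun z hz => hz.2.le⟩
  set b := sInf (A ∩ Ioi x) with hbdef
  have hbA : b ∈ A := by
    have := csInf_mem_closure hhi hhibdd
    exact hA.closed.closure_subset ((closure_mono inter_subset_left) this)
  have hxb : x < b := by
    rcases eq_or_lt_of_le (le_csInf hhi fun z hz => hz.2.le) with h | h
    · exfalso
      have hub : ∀ z ∈ A ∩ Ioi x, x + ε ≤ z := by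
        intro z hz
        by_contra hzc
        push_neg at hzc
        have hzx : x < z := mem_Ioi.1 hz.2
        have : z ∈ A ∩ Ioo (x - ε) (x + ε) := ⟨hz.1, by linarith, hzc⟩
        rw [hisol, mem_singleton_iff] at this
        exact (ne_of_gt hzx) this
      have := le_csInf hhi hub
      rw [← h] at this; linarith
    · exact h
  have hgapb : Ioo x b ∩ A = ∅ := by
    ext z
    simp only [mem_inter_iff, mem_Ioo, mem_empty_iff_false, iff_false, not_and, and_imp]
    intro hxz hzb hzA
    exact absurd (csInf_le hhibdd ⟨hzA, hxz⟩) (not_le.2 hzb)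
  have hfb : f x = f b := hA.gap x b hx hbA hxb hgapb
  have hP := minimal_P hA hmin haA hbA (hax.trans hxb) (hfa.trans hfb)
  have : x ∈ Ioo a b ∩ A := ⟨⟨hax, hxb⟩, hx⟩
  rw [hP] at this
  exact this



/-- From a closed set `A ⊆ [0,1]` whose points in `(0,1)` are non-isolated, construct a
finite atomless measure concentrated on `A`, positive on intervals meeting `A`. -/
lemma exists_good_measure {A : Set ℝ} (hclosed : IsClosed A)
    (hiso : ∀ x ∈ A, 0 < x → x < 1 → ∀ ε > 0, ∃ y ∈ A, y ≠ x ∧ |y - x| < ε) :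
    ∃ μ : Measure ℝ, μ univ ≤ 2 ∧ (∀ c : ℝ, μ {c} = 0) ∧ μ Aᶜ = 0 ∧
      ∀ s t : ℝ, 0 ≤ s → t ≤ 1 → (A ∩ Ioo s t).Nonempty → 0 < μ (Ioo s t) := by
  classical
  let e : ℕ ≃ ℚ × ℚ := (Denumerable.eqv (ℚ × ℚ)).symm
  let B : ℕ → Set ℝ := fun n => A ∩ Ioo ((e n).1 : ℝ) ((e n).2 : ℝ) ∩ Ioo 0 1
  have hBsub : ∀ n, closure (B n) ⊆ A := fun n =>
    (closure_mono (inter_subset_left.trans inter_subset_left)).trans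
      (hclosed.closure_subset_iff.2 Subset.rfl)
  have H : ∀ n : ℕ, ∃ ν : Measure ℝ, ν univ ≤ 1 ∧ (∀ c : ℝ, ν {c} = 0) ∧ ν Aᶜ = 0 ∧
      ((B n).Nonempty → ν (closure (B n)) = 1) := by
    intro n
    by_cases hne : (B n).Nonempty
    · have hpre : Preperfect (B n) := by
        rw [preperfect_iff_nhds]
        intro x hx U hU
        obtain ⟨ε₀, hε₀, hball⟩ := Metric.mem_nhds_iff.1 hU
        have hopen : IsOpen (Ioo ((e n).1 : ℝ) ((e n).2 : ℝ) ∩ Ioo 0 1) :=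
          isOpen_Ioo.inter isOpen_Ioo
        have hxo : x ∈ Ioo ((e n).1 : ℝ) ((e n).2 : ℝ) ∩ Ioo 0 1 := ⟨hx.1.2, hx.2⟩
        obtain ⟨ε₁, hε₁, hball₁⟩ := Metric.isOpen_iff.1 hopen x hxo
        obtain ⟨y, hyA, hyx, hyd⟩ := hiso x hx.1.1 hx.2.1 hx.2.2 (min ε₀ ε₁)
          (lt_min hε₀ hε₁)
        have hyb : y ∈ Metric.ball x ε₁ := by
          rw [Metric.mem_ball, Real.dist_eq]; exact hyd.trans_le (min_le_right _ _)
        have hyb0 : y ∈ Metric.ball x ε₀ := by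
          rw [Metric.mem_ball, Real.dist_eq]; exact hyd.trans_le (min_le_left _ _)
        have := hball₁ hyb
        exact ⟨y, ⟨hball hyb0, ⟨hyA, this.1⟩, this.2⟩, hyx⟩
      have hperf : Perfect (closure (B n)) := hpre.perfect_closure
      have hclne : (closure (B n)).Nonempty := hne.closure
      obtain ⟨ν, hν1, hν2, hν3⟩ := exists_measure_on_perfect hperf hclne
      refine ⟨ν, hν1.le, hν2, ?_, fun _ => ?_⟩
      · have : Aᶜ ⊆ (closure (B n))ᶜ := compl_subset_compl.2 (hBsub n)
        exact le_antisymm ((measure_mono this).trans hν3.le) (zero_le)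
      · have hm : MeasurableSet (closure (B n)) := isClosed_closure.measurableSet
        have := measure_add_measure_compl (μ := ν) hm
        rw [hν3, add_zero] at this
        rw [this, hν1]
    · exact ⟨0, by simp, by simp, by simp, fun h => absurd h hne⟩
  choose ν hν1 hν2 hν3 hν4 using H
  set μ : Measure ℝ := Measure.sum (fun n => ((2:ℝ≥0∞)⁻¹) ^ n • ν n) with hμ
  have hμapp : ∀ S : Set ℝ, MeasurableSet S → μ S = ∑' n, ((2:ℝ≥0∞)⁻¹) ^ n * ν n S := by
    intro S hS
    rw [hμ, Measure.sum_apply _ hS]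
    simp [Measure.smul_apply, smul_eq_mul]
  refine ⟨μ, ?_, ?_, ?_, ?_⟩
  · rw [hμapp univ MeasurableSet.univ]
    calc ∑' n, ((2:ℝ≥0∞)⁻¹) ^ n * ν n univ ≤ ∑' n, ((2:ℝ≥0∞)⁻¹) ^ n * 1 :=
          ENNReal.tsum_le_tsum fun n => mul_le_mul_right (hν1 n) _
      _ = 2 := by
          simp only [mul_one]
          rw [ENNReal.tsum_geometric]
          norm_num
  · intro c
    rw [hμapp {c} (MeasurableSet.singleton c)]
    simp [hν2]
  · rw [hμapp Aᶜ hclosed.measurableSet.compl]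
    simp [hν3]
  · rintro s t hs ht ⟨x, hxA, hxs, hxt⟩
    have hx0 : 0 < x := lt_of_le_of_lt hs hxs
    have hx1 : x < 1 := lt_of_lt_of_le hxt ht
    obtain ⟨p, hp1, hp2⟩ := exists_rat_btwn hxs
    obtain ⟨q, hq1, hq2⟩ := exists_rat_btwn hxt
    obtain ⟨n, hen⟩ : ∃ n, e n = (p, q) := ⟨e.symm (p, q), e.apply_symm_apply _⟩
    have hBn : B n = A ∩ Ioo (p : ℝ) (q : ℝ) ∩ Ioo 0 1 := by
      simp only [B, hen]
    have hxB : x ∈ B n := by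
      rw [hBn]
      exact ⟨⟨hxA, hp2, hq1⟩, hx0, hx1⟩
    have hsub2 : closure (B n) ⊆ Ioo s t := by
      have h1 : B n ⊆ Icc (p : ℝ) (q : ℝ) := by
        rw [hBn]
        exact fun z hz => ⟨hz.1.2.1.le, hz.1.2.2.le⟩
      have := (closure_mono h1).trans (by rw [closure_Icc] : closure (Icc (p:ℝ) q) ⊆ Icc (p:ℝ) q)
      intro z hz
      have hz' := this hz
      exact ⟨hp1.trans_le hz'.1, hz'.2.trans_lt hq2⟩
    have hterm : ((2:ℝ≥0∞)⁻¹) ^ n * ν n (Ioo s t) = ((2:ℝ≥0∞)⁻¹) ^ n := by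
      have h1 : ν n (Ioo s t) ≥ ν n (closure (B n)) := measure_mono hsub2
      rw [hν4 n ⟨x, hxB⟩] at h1
      have h2 : ν n (Ioo s t) ≤ 1 := le_trans (measure_mono (subset_univ _)) (hν1 n)
      rw [le_antisymm h2 h1, mul_one]
    have : ((2:ℝ≥0∞)⁻¹) ^ n ≤ μ (Ioo s t) := by
      rw [hμapp _ measurableSet_Ioo, ← hterm]
      exact ENNReal.le_tsum n
    refine lt_of_lt_of_le ?_ this
    apply ENNReal.pow_pos
    simp

end ShortcutAux

open ShortcutAux
open Set MeasureTheory Filter Topology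
open scoped ENNReal

/-- Every topological path in a Hausdorff space with distinct endpoints can be
shortcut by an injective topological path with the same endpoints: there is an
injective continuous `τ` and a strictly increasing (not necessarily continuous)
`m` with `τ = σ ∘ m`. -/
theorem exists_injective_shortcut
    {X : Type} [TopologicalSpace X] [T2Space X]
    (σ : unitInterval → X) (hσ : Continuous σ) (hne : σ 0 ≠ σ 1) :
    ∃ (τ : unitInterval → X) (m : unitInterval → unitInterval),
      Continuous τ ∧ Function.Injective τ ∧ StrictMono m ∧
      (∀ x, τ x = σ (m x)) ∧ τ 0 = σ 0 ∧ τ 1 = σ 1 := by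
  classical
  set f : ℝ → X := σ ∘ projIcc (0:ℝ) 1 zero_le_one with hfdef
  have hf : Continuous f := hσ.comp continuous_projIcc
  have hfI : ∀ (x : ℝ) (hx : x ∈ Icc (0:ℝ) 1), f x = σ ⟨x, hx⟩ := by
    intro x hx
    simp only [hfdef, Function.comp_apply]
    rw [projIcc_of_mem zero_le_one hx]
  have hf0 : f 0 = σ 0 := hfI 0 (by norm_num)
  have hf1 : f 1 = σ 1 := hfI 1 (by norm_num)
  obtain ⟨A, hA, hmin⟩ := exists_minimal_good f hf
  have hP : ∀ {a b : ℝ}, a ∈ A → b ∈ A → a < b → f a = f b → Ioo a b ∩ A = ∅ :=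
    fun ha hb hab hfab => minimal_P hA hmin ha hb hab hfab
  obtain ⟨μ, hμ2, hμatom, hμAc, hμpos⟩ :=
    exists_good_measure hA.closed (fun x hx hx0 hx1 => not_isolated hA hmin hx hx0 hx1)
  have hfin : ∀ S : Set ℝ, μ S ≠ ⊤ :=
    fun S => ((measure_mono (subset_univ _)).trans_lt
      (hμ2.trans_lt (by norm_num : (2:ℝ≥0∞) < ⊤))).ne
  set Q : ℝ → ℝ := fun t => (μ (Iic t)).toReal with hQdef
  have hQmono : Monotone Q := fun s t h =>
    ENNReal.toReal_mono (hfin _) (measure_mono (Iic_subset_Iic.2 h))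
  have hQdiff : ∀ s t : ℝ, s ≤ t → Q t - Q s = (μ (Ioc s t)).toReal := by
    intro s t h
    have hU : Iic s ∪ Ioc s t = Iic t := Iic_union_Ioc_eq_Iic h
    have hdisj : Disjoint (Iic s) (Ioc s t) := Iic_disjoint_Ioc le_rfl
    have := measure_union (μ := μ) hdisj measurableSet_Ioc
    rw [hU] at this
    simp only [hQdef]
    rw [this, ENNReal.toReal_add (hfin _) (hfin _)]
    ring
  -- F1: no points of A strictly between s and t ⟹ Q s = Q t
  have hF1 : ∀ s t : ℝ, s ≤ t → Ioo s t ∩ A = ∅ → Q s = Q t := by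
    intro s t h hgap
    have h1 : μ (Ioc s t) = 0 := by
      have hsub : Ioc s t ⊆ Ioo s t ∪ {t} := by
        intro z hz
        rcases eq_or_lt_of_le hz.2 with h' | h'
        · exact Or.inr (by simp [h'])
        · exact Or.inl ⟨hz.1, h'⟩
      have h2 : μ (Ioo s t) = 0 := by
        have : Ioo s t ⊆ Aᶜ := by
          intro z hz hzA
          have : z ∈ Ioo s t ∩ A := ⟨hz, hzA⟩
          rw [hgap] at this; exact this
        exact le_antisymm ((measure_mono this).trans hμAc.le) (zero_le)
      refine le_antisymm ?_ (zero_le)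
      calc μ (Ioc s t) ≤ μ (Ioo s t ∪ {t}) := measure_mono hsub
        _ ≤ μ (Ioo s t) + μ {t} := measure_union_le _ _
        _ = 0 := by rw [h2, hμatom]; simp
    have := hQdiff s t h
    rw [h1] at this
    simp at this
    linarith
  -- F0: equal Q-values ⟹ no points of A strictly between
  have hF0 : ∀ s t : ℝ, 0 ≤ s → s < t → t ≤ 1 → Q s = Q t → Ioo s t ∩ A = ∅ := by
    intro s t hs hst ht hQ
    by_contra hne'
    obtain ⟨x, hx⟩ := nonempty_iff_ne_empty.2 hne'
    have hpos := hμpos s t hs ht ⟨x, hx.2, hx.1⟩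
    have h1 : 0 < μ (Ioc s t) := lt_of_lt_of_le hpos (measure_mono Ioo_subset_Ioc_self)
    have h2 := hQdiff s t hst.le
    rw [hQ] at h2
    have : (μ (Ioc s t)).toReal = 0 := by linarith
    rw [ENNReal.toReal_eq_zero_iff] at this
    rcases this with h | h
    · exact absurd h h1.ne'
    · exact hfin _ h
  -- continuity of Q
  have hQcont : Continuous Q := by
    rw [Metric.continuous_iff]
    intro t ε hε
    set Bs : ℕ → Set ℝ := fun n => Ioc (t - 1/(n+1)) (t + 1/(n+1)) with hBs
    have hiB : ⋂ n, Bs n = {t} := by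
      apply Subset.antisymm
      · intro x hx
        simp only [mem_iInter, hBs, mem_Ioc] at hx
        have h1 : x ≤ t := by
          by_contra h
          push_neg at h
          obtain ⟨n, hn⟩ := exists_nat_one_div_lt (sub_pos.2 h)
          have := (hx n).2
          rw [show (1:ℝ)/(n+1) = 1/(↑n+1) by norm_num] at hn
          linarith
        have h2 : t ≤ x := by
          by_contra h
          push_neg at h
          obtain ⟨n, hn⟩ := exists_nat_one_div_lt (sub_pos.2 h)
          have := (hx n).1
          rw [show (1:ℝ)/(n+1) = 1/(↑n+1) by norm_num] at hn
          linarith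
        simp [le_antisymm h1 h2]
      · rintro x rfl
        simp only [mem_iInter, hBs, mem_Ioc]
        intro n
        have : (0:ℝ) < 1/(n+1) := by positivity
        constructor <;> linarith
    have hmono : Antitone Bs := by
      intro a b hab
      apply Ioc_subset_Ioc
      · have : (1:ℝ)/(b+1) ≤ 1/(a+1) := by
          apply div_le_div_of_nonneg_left one_pos.le (by positivity)
          exact_mod_cast Nat.succ_le_succ hab
        linarith
      · have : (1:ℝ)/(b+1) ≤ 1/(a+1) := by
          apply div_le_div_of_nonneg_left one_pos.le (by positivity)
          exact_mod_cast Nat.succ_le_succ hab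
        linarith
    have htend : Tendsto (fun n => μ (Bs n)) atTop (𝓝 (μ (⋂ n, Bs n))) := by
      apply tendsto_measure_iInter_atTop
      · exact fun n => measurableSet_Ioc.nullMeasurableSet
      · exact hmono
      · exact ⟨0, hfin _⟩
    rw [hiB, hμatom t] at htend
    have hev : ∀ᶠ n in atTop, μ (Bs n) < ENNReal.ofReal ε := by
      apply htend.eventually_lt_const
      simpa using ENNReal.ofReal_pos.2 hε
    obtain ⟨n, hn⟩ := hev.exists
    refine ⟨1/(n+1), by positivity, ?_⟩
    intro s hst
    rw [Real.dist_eq] at hst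
    have key : ∀ u v : ℝ, u ≤ v → Ioc u v ⊆ Bs n → |Q v - Q u| < ε := by
      intro u v huv hsub
      rw [hQdiff u v huv, abs_of_nonneg ENNReal.toReal_nonneg]
      have h1 : μ (Ioc u v) < ENNReal.ofReal ε := lt_of_le_of_lt (measure_mono hsub) hn
      exact ENNReal.toReal_lt_of_lt_ofReal h1
    rw [Real.dist_eq]
    rcases le_total s t with h | h
    · have : |Q t - Q s| < ε := by
        apply key s t h
        apply Ioc_subset_Ioc _ _
        · rw [abs_sub_lt_iff] at hst; linarith [hst.2]
        · have : (0:ℝ) < 1/(n+1) := by positivity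
          linarith
      rwa [abs_sub_comm]
    · apply key t s h
      apply Ioc_subset_Ioc _ _
      · have : (0:ℝ) < 1/(n+1) := by positivity
        linarith
      · rw [abs_sub_lt_iff] at hst; linarith [hst.1]
  -- Q agrees on A-points with equal values
  have hQ0 : Q 0 = 0 := by
    simp only [hQdef]
    have h1 : μ (Iic 0) = 0 := by
      have hsub : Iic (0:ℝ) ⊆ Aᶜ ∪ {0} := by
        intro z hz
        by_cases h : z = 0
        · exact Or.inr (by simp [h])
        · left
          intro hzA
          exact h (le_antisymm hz ((hA.subset hzA).1))
      refine le_antisymm ?_ (zero_le)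
      calc μ (Iic 0) ≤ μ (Aᶜ ∪ {0}) := measure_mono hsub
        _ ≤ μ Aᶜ + μ {0} := measure_union_le _ _
        _ = 0 := by rw [hμAc, hμatom]; simp
    rw [h1]; simp
  set c : ℝ := Q 1 with hcdef
  have hc : 0 < c := by
    have hA01 : (A ∩ Ioo 0 1).Nonempty := by
      by_contra h
      rw [not_nonempty_iff_eq_empty] at h
      have : Ioo (0:ℝ) 1 ∩ A = ∅ := by rw [inter_comm]; exact h
      have := hA.gap 0 1 hA.zero hA.one one_pos this
      rw [hf0, hf1] at this
      exact hne this
    have hpos := hμpos 0 1 le_rfl le_rfl hA01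
    have h1 : 0 < μ (Ioc 0 1) := lt_of_lt_of_le hpos (measure_mono Ioo_subset_Ioc_self)
    have h2 := hQdiff 0 1 zero_le_one
    rw [hQ0] at h2
    have h3 : 0 < (μ (Ioc 0 1)).toReal := ENNReal.toReal_pos h1.ne' (hfin _)
    simp only [hcdef]
    linarith
  -- f-values agree on A-points with equal Q-values
  have hQf : ∀ u v : ℝ, u ∈ A → v ∈ A → Q u = Q v → f u = f v := by
    intro u v hu hv hQ
    rcases lt_trichotomy u v with h | h | h
    · exact hA.gap u v hu hv h (hF0 u v (hA.subset hu).1 h (hA.subset hv).2 hQ)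
    · rw [h]
    · exact (hA.gap v u hv hu h (hF0 v u (hA.subset hv).1 h (hA.subset hu).2 hQ.symm)).symm
  -- the fibers and the reparametrisation
  set Fib : unitInterval → Set ℝ := fun y => Icc 0 1 ∩ Q ⁻¹' {c * y} with hFib
  have hFibne : ∀ y : unitInterval, (Fib y).Nonempty := by
    intro y
    have h1 : c * y ∈ Icc (Q 0) (Q 1) := by
      rw [hQ0, ← hcdef]
      constructor
      · exact mul_nonneg hc.le y.2.1
      · nlinarith [y.2.2, hc]
    obtain ⟨t, ht, hQt⟩ := intermediate_value_Icc zero_le_one hQcont.continuousOn h1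
    exact ⟨t, ht, by simp [hQt]⟩
  have hFibclosed : ∀ y, IsClosed (Fib y) :=
    fun y => isClosed_Icc.inter (isClosed_singleton.preimage hQcont)
  set mR : unitInterval → ℝ := fun y => sInf (Fib y) with hmR
  have hmRmem : ∀ y, mR y ∈ Fib y := fun y =>
    (hFibclosed y).csInf_mem (hFibne y) ⟨0, fun z hz => hz.1.1⟩
  have hmRIcc : ∀ y, mR y ∈ Icc (0:ℝ) 1 := fun y => (hmRmem y).1
  have hmRQ : ∀ y, Q (mR y) = c * y := fun y => (hmRmem y).2
  have hmRA : ∀ y, mR y ∈ A := by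
    intro y
    by_contra hu
    set u := mR y with hudef
    have hlo : (A ∩ Iic u).Nonempty := ⟨0, hA.zero, (hmRIcc y).1⟩
    have hbdd : BddAbove (A ∩ Iic u) := ⟨u, fun z hz => hz.2⟩
    set a := sSup (A ∩ Iic u) with hadef
    have haA : a ∈ A ∩ Iic u := (hA.closed.inter isClosed_Iic).csSup_mem hlo hbdd
    have hau : a < u := lt_of_le_of_ne haA.2 (fun h => hu (h ▸ haA.1))
    have hgap : Ioo a u ∩ A = ∅ := by
      ext z
      simp only [mem_inter_iff, mem_Ioo, mem_empty_iff_false, iff_false, not_and, and_imp]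
      intro haz hzu hzA
      exact absurd (le_csSup hbdd ⟨hzA, hzu.le⟩) (not_le.2 haz)
    have hQa : Q a = Q u := hF1 a u hau.le hgap
    have haFib : a ∈ Fib y := ⟨⟨(hA.subset haA.1).1, (hA.subset haA.1).2⟩, by
      simp only [mem_preimage, mem_singleton_iff]
      rw [hQa]; exact hmRQ y⟩
    exact absurd (csInf_le ⟨0, fun z hz => hz.1.1⟩ haFib) (not_le.2 hau)
  set m : unitInterval → unitInterval := fun y => ⟨mR y, hmRIcc y⟩ with hm
  set τ : unitInterval → X := fun y => f (mR y) with hτ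
  have hτσ : ∀ y, τ y = σ (m y) := fun y => hfI (mR y) (hmRIcc y)
  have hmmono : StrictMono m := by
    intro y y' h
    have h1 : Q (mR y) < Q (mR y') := by
      rw [hmRQ, hmRQ]
      have : (y:ℝ) < y' := h
      nlinarith
    have : mR y < mR y' := by
      by_contra h'
      push_neg at h'
      exact absurd (hQmono h') (not_le.2 h1)
    exact this
  have hτinj : Function.Injective τ := by
    intro y y' hτeq
    by_contra hne'
    have key : ∀ z w : unitInterval, z < w → τ z = τ w → False := by
      intro z w hzw heq
      have h1 : mR z < mR w := hmmono hzw
      have h2 : Ioo (mR z) (mR w) ∩ A = ∅ := hP (hmRA z) (hmRA w) h1 heq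
      have h3 : Q (mR z) = Q (mR w) := hF1 _ _ h1.le h2
      rw [hmRQ, hmRQ] at h3
      have : (z:ℝ) = w := by
        field_simp at h3
        linarith
      exact (ne_of_lt hzw) (Subtype.ext this)
    rcases lt_or_gt_of_ne hne' with h | h
    · exact key y y' h hτeq
    · exact key y' y h hτeq.symm
  -- endpoints
  have hτ0 : τ 0 = σ 0 := by
    have h1 : Q (mR 0) = Q 0 := by
      rw [hmRQ, hQ0]; simp
    rw [hτ, ← hf0]
    exact (hQf (mR 0) 0 (hmRA 0) hA.zero h1)
  have hτ1 : τ 1 = σ 1 := by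
    have h1 : Q (mR 1) = Q 1 := by
      rw [hmRQ, ← hcdef]; simp
    rw [hτ, ← hf1]
    exact (hQf (mR 1) 1 (hmRA 1) hA.one h1)
  -- continuity of τ via the quotient map q
  have hq0 : ∀ t : unitInterval, Q t / c ∈ Icc (0:ℝ) 1 := by
    intro t
    constructor
    · exact div_nonneg (by rw [← hQ0]; exact hQmono t.2.1) hc.le
    · rw [div_le_one hc]
      exact hQmono t.2.2
  set q : unitInterval → unitInterval := fun t => ⟨Q t / c, hq0 t⟩ with hq
  have hqcont : Continuous q := by
    apply Continuous.subtype_mk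
    exact (hQcont.comp continuous_subtype_val).div_const c
  have hqsurj : Function.Surjective q := by
    intro y
    refine ⟨m y, ?_⟩
    apply Subtype.ext
    simp only [hq]
    rw [show Q (mR y) = c * y from hmRQ y]
    field_simp
  -- the left-endpoint retraction ρ
  set ρ : ℝ → ℝ := fun t => sSup (A ∩ Iic t) with hρ
  have hρspec : ∀ t : ℝ, 0 ≤ t → ρ t ∈ A ∧ ρ t ≤ t ∧ Ioo (ρ t) t ∩ A = ∅ := by
    intro t ht
    have hlo : (A ∩ Iic t).Nonempty := ⟨0, hA.zero, ht⟩
    have hbdd : BddAbove (A ∩ Iic t) := ⟨t, fun z hz => hz.2⟩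
    have hmem : ρ t ∈ A ∩ Iic t := (hA.closed.inter isClosed_Iic).csSup_mem hlo hbdd
    refine ⟨hmem.1, hmem.2, ?_⟩
    ext z
    simp only [mem_inter_iff, mem_Ioo, mem_empty_iff_false, iff_false, not_and, and_imp]
    intro hρz hzt hzA
    exact absurd (le_csSup hbdd ⟨hzA, hzt.le⟩) (not_le.2 hρz)
  have hρmemle : ∀ t s : ℝ, s ∈ A → s ≤ t → s ≤ ρ t := by
    intro t s hsA hst
    exact le_csSup ⟨t, fun z hz => hz.2⟩ ⟨hsA, hst⟩
  -- τ ∘ q = f ∘ ρ on the unit interval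
  have hτq : ∀ t : unitInterval, τ (q t) = f (ρ t) := by
    intro t
    have h0t : (0:ℝ) ≤ t := t.2.1
    obtain ⟨hρA, hρle, hρgap⟩ := hρspec t h0t
    have h1 : Q (mR (q t)) = Q (t : ℝ) := by
      rw [hmRQ]
      simp only [hq]
      field_simp
    have h2 : Q (ρ t) = Q (t : ℝ) := hF1 _ _ hρle (by
      ext z
      simp only [mem_inter_iff, mem_Ioo, mem_empty_iff_false, iff_false, not_and, and_imp]
      intro h1' h2' h3'
      have : z ∈ Ioo (ρ (t:ℝ)) (t:ℝ) ∩ A := ⟨⟨h1', h2'⟩, h3'⟩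
      rw [hρgap] at this
      exact this)
    exact hQf (mR (q t)) (ρ t) (hmRA (q t)) hρA (h1.trans h2.symm)
  -- continuity of f ∘ ρ on the unit interval
  have hfρcont : Continuous (fun t : unitInterval => f (ρ t)) := by
    rw [continuous_iff_continuousAt]
    intro t₀
    intro U hU
    obtain ⟨V, hVU, hVopen, hVmem⟩ := mem_nhds_iff.1 hU
    obtain ⟨hρA, hρle, hρgap⟩ := hρspec t₀ t₀.2.1
    -- we find δ > 0 such that every t with |t - t₀| < δ satisfies f (ρ t) ∈ V
    have key : ∃ δ > 0, ∀ t : unitInterval, |(t:ℝ) - (t₀:ℝ)| < δ → f (ρ t) ∈ V := by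
      by_cases ht₀A : (t₀:ℝ) ∈ A
      · -- t₀ ∈ A; then ρ t₀ = t₀
        have hρt₀ : ρ (t₀:ℝ) = t₀ :=
          le_antisymm hρle (hρmemle _ _ ht₀A le_rfl)
        have hWopen : IsOpen (f ⁻¹' V) := hVopen.preimage hf
        have hWmem : (t₀:ℝ) ∈ f ⁻¹' V := by
          simp only [mem_preimage]
          rw [← hρt₀]; exact hVmem
        obtain ⟨ε, hε, hball⟩ := Metric.isOpen_iff.1 hWopen _ hWmem
        have hballW : ∀ z : ℝ, |z - (t₀:ℝ)| < ε → f z ∈ V := by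
          intro z hz
          exact hball (by rwa [Metric.mem_ball, Real.dist_eq])
        -- right side always fine with δ = ε; left side needs care
        by_cases hL : (A ∩ Ioo ((t₀:ℝ) - ε) (t₀:ℝ)).Nonempty
        · obtain ⟨a', ha'A, ha'1, ha'2⟩ := hL
          refine ⟨min ε ((t₀:ℝ) - a'), lt_min hε (by linarith), ?_⟩
          intro t hdist
          rcases le_total (t:ℝ) (t₀:ℝ) with hle | hle
          · -- left: ρ t ∈ [a', t]
            have hat : a' ≤ (t:ℝ) := by
              rw [abs_sub_lt_iff] at hdist
              have := hdist.2
              have h' := lt_of_lt_of_le this (min_le_right _ _)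
              linarith
            have h1 : a' ≤ ρ t := hρmemle _ _ ha'A hat
            have h2 : ρ (t:ℝ) ≤ (t:ℝ) := (hρspec t t.2.1).2.1
            apply hballW
            rw [abs_sub_lt_iff]
            constructor
            · linarith
            · linarith
          · -- right: ρ t ∈ [t₀, t]
            have h1 : (t₀:ℝ) ≤ ρ t := hρmemle _ _ ht₀A hle
            have h2 : ρ (t:ℝ) ≤ (t:ℝ) := (hρspec t t.2.1).2.1
            apply hballW
            rw [abs_sub_lt_iff]
            have := abs_sub_lt_iff.1 hdist
            have h3 := lt_of_lt_of_le this.1 (min_le_left _ _)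
            constructor
            · linarith
            · linarith
        · -- no A-points in (t₀ - ε, t₀)
          by_cases ht₀0 : (t₀:ℝ) = 0
          · -- t₀ = 0: only right side matters
            refine ⟨ε, hε, ?_⟩
            intro t hdist
            have hle : (t₀:ℝ) ≤ (t:ℝ) := by rw [ht₀0]; exact t.2.1
            have h1 : (t₀:ℝ) ≤ ρ t := hρmemle _ _ ht₀A hle
            have h2 : ρ (t:ℝ) ≤ (t:ℝ) := (hρspec t t.2.1).2.1
            apply hballW
            rw [abs_sub_lt_iff]
            have := abs_sub_lt_iff.1 hdist
            constructor
            · linarith [this.1]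
            · linarith [this.2]
          · -- t₀ > 0: take a = sup(A ∩ Iio t₀), a gap endpoint
            have ht₀pos : 0 < (t₀:ℝ) := lt_of_le_of_ne t₀.2.1 (Ne.symm ht₀0)
            have hlo : (A ∩ Iio (t₀:ℝ)).Nonempty := ⟨0, hA.zero, ht₀pos⟩
            have hbdd : BddAbove (A ∩ Iio (t₀:ℝ)) := ⟨t₀, fun z hz => hz.2.le⟩
            set a := sSup (A ∩ Iio (t₀:ℝ)) with hadef
            have haA : a ∈ A := by
              have := csSup_mem_closure hlo hbdd
              exact hA.closed.closure_subset ((closure_mono inter_subset_left) this)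
            have hale : ∀ z ∈ A ∩ Iio (t₀:ℝ), z ≤ (t₀:ℝ) - ε := by
              intro z hz
              by_contra h
              push_neg at h
              exact absurd ⟨hz.1, h, hz.2⟩ (fun hmem => hL ⟨z, hmem⟩)
            have ha1 : a ≤ (t₀:ℝ) - ε := csSup_le hlo hale
            have ha2 : a < (t₀:ℝ) := by linarith
            have hgapa : Ioo a (t₀:ℝ) ∩ A = ∅ := by
              ext z
              simp only [mem_inter_iff, mem_Ioo, mem_empty_iff_false, iff_false,
                not_and, and_imp]
              intro h1' h2' h3'
              exact absurd (le_csSup hbdd ⟨h3', h2'⟩) (not_le.2 h1')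
            have hfa : f a = f (t₀:ℝ) := hA.gap a _ haA ht₀A ha2 hgapa
            refine ⟨min ε ((t₀:ℝ) - a), lt_min hε (by linarith), ?_⟩
            intro t hdist
            rcases le_total (t:ℝ) (t₀:ℝ) with hle | hle
            · rcases eq_or_lt_of_le hle with heq | hlt
              · have : f (ρ (t:ℝ)) = f (ρ (t₀:ℝ)) := by rw [heq]
                rw [this]
                simpa using hVmem
              · -- a < t < t₀ : ρ t = a
                have hat : a < (t:ℝ) := by
                  rw [abs_sub_lt_iff] at hdist
                  have := lt_of_lt_of_le hdist.2 (min_le_right _ _)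
                  linarith
                have hρta : ρ (t:ℝ) = a := by
                  apply le_antisymm
                  · apply csSup_le (⟨0, hA.zero, t.2.1⟩ : (A ∩ Iic (t:ℝ)).Nonempty)
                    intro z hz
                    by_contra h
                    push_neg at h
                    have : z ∈ Ioo a (t₀:ℝ) ∩ A := ⟨⟨h, lt_of_le_of_lt hz.2 hlt⟩, hz.1⟩
                    rw [hgapa] at this
                    exact this
                  · exact hρmemle _ _ haA hat.le
                rw [hρta, hfa, ← hρt₀]
                simpa using hVmem
            · have h1 : (t₀:ℝ) ≤ ρ t := hρmemle _ _ ht₀A hle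
              have h2 : ρ (t:ℝ) ≤ (t:ℝ) := (hρspec t t.2.1).2.1
              apply hballW
              rw [abs_sub_lt_iff]
              have := abs_sub_lt_iff.1 hdist
              have h3 := lt_of_lt_of_le this.1 (min_le_left _ _)
              constructor
              · linarith
              · linarith
      · -- t₀ ∉ A : inside a gap, f ∘ ρ locally constant
        have hρlt : ρ (t₀:ℝ) < (t₀:ℝ) := lt_of_le_of_ne hρle (fun h => ht₀A (h ▸ hρA))
        have hhi : (A ∩ Ici (t₀:ℝ)).Nonempty := ⟨1, hA.one, t₀.2.2⟩
        have hhibdd : BddBelow (A ∩ Ici (t₀:ℝ)) := ⟨t₀, fun z hz => hz.2⟩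
        set b := sInf (A ∩ Ici (t₀:ℝ)) with hbdef
        have hbmem : b ∈ A ∩ Ici (t₀:ℝ) :=
          (hA.closed.inter isClosed_Ici).csInf_mem hhi hhibdd
        have hbgt : (t₀:ℝ) < b := lt_of_le_of_ne hbmem.2 (fun h => ht₀A (h ▸ hbmem.1))
        refine ⟨min ((t₀:ℝ) - ρ (t₀:ℝ)) (b - (t₀:ℝ)), lt_min (by linarith) (by linarith), ?_⟩
        intro t hdist
        have hab : ρ (t₀:ℝ) < (t:ℝ) ∧ (t:ℝ) < b := by
          rw [abs_sub_lt_iff] at hdist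
          constructor
          · have := lt_of_lt_of_le hdist.2 (min_le_left _ _)
            linarith
          · have := lt_of_lt_of_le hdist.1 (min_le_right _ _)
            linarith
        have hρt : ρ (t:ℝ) = ρ (t₀:ℝ) := by
          apply le_antisymm
          · apply csSup_le (⟨0, hA.zero, t.2.1⟩ : (A ∩ Iic (t:ℝ)).Nonempty)
            intro z hz
            by_contra h
            push_neg at h
            -- z ∈ A, ρ t₀ < z ≤ t < b : contradiction with gap structure
            have hzb : z < b := lt_of_le_of_lt hz.2 hab.2
            rcases le_or_gt z (t₀:ℝ) with h' | h'
            · rcases eq_or_lt_of_le h' with h'' | h'' 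
              · exact ht₀A (h'' ▸ hz.1)
              · have : z ∈ Ioo (ρ (t₀:ℝ)) (t₀:ℝ) ∩ A := ⟨⟨h, h''⟩, hz.1⟩
                rw [hρgap] at this
                exact this
            · exact absurd (csInf_le hhibdd ⟨hz.1, h'.le⟩) (not_le.2 hzb)
          · exact hρmemle _ _ hρA hab.1.le
        rw [hρt]
        simpa using hVmem
    obtain ⟨δ, hδ, hkey⟩ := key
    rw [mem_map, Metric.mem_nhds_iff]
    refine ⟨δ, hδ, ?_⟩
    intro t ht
    rw [Metric.mem_ball, Subtype.dist_eq, Real.dist_eq] at ht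
    exact hVU (hkey t ht)
  have hquot : IsQuotientMap q :=
    (hqcont.isClosedMap).isQuotientMap hqcont hqsurj
  have hτcont : Continuous τ := by
    rw [hquot.continuous_iff]
    have : (τ ∘ q) = fun t : unitInterval => f (ρ t) := funext hτq
    rw [this]
    exact hfρcont
  exact ⟨τ, m, hτcont, hτinj, hmmono, hτσ, hτ0, hτ1⟩
end
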